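/- arXiv:0709.2667 — 6 statements merged into one kernel-verified Lean document; each statement's English description precedes it below -/
import Mathlib

section
/- For every matrix A in SL(2,ℝ), the operator norm of A equals e^{d(A·i, i)/2}, where A acts on the upper half-plane ℍ by Möbius transformations (A·w = (aw+b)/(cw+d)) and d is the hyperbolic distance on ℍ (with metric of curvature -1). -/
/-- Operator norm of a 2×2 real matrix, induced by the Euclidean norm on ℝ². -/
noncomputable def opNorm (A : Matrix (Fin 2) (Fin 2) ℝ) : ℝ :=
  ‖Matrix.toEuclideanCLM (𝕜 := ℝ) A‖

/-- Auxiliary vector in `EuclideanSpace ℝ (Fin 2)`. -/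
noncomputable def ev (p q : ℝ) : EuclideanSpace ℝ (Fin 2) :=
  (WithLp.equiv 2 (Fin 2 → ℝ)).symm ![p, q]

lemma ev_norm (p q : ℝ) : ‖ev p q‖ = Real.sqrt (p^2 + q^2) := by
  rw [EuclideanSpace.norm_eq]
  congr 1
  simp [ev, Fin.sum_univ_two, sq_abs]

lemma ev_apply (B : Matrix (Fin 2) (Fin 2) ℝ) (p q : ℝ) :
    Matrix.toEuclideanCLM (𝕜 := ℝ) B (ev p q)
      = ev (B 0 0 * p + B 0 1 * q) (B 1 0 * p + B 1 1 * q) := by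
  rw [ev, WithLp.equiv_symm_apply, Matrix.toEuclideanCLM_toLp]
  congr 1
  ext i
  fin_cases i <;>
    simp [Matrix.mulVec, dotProduct, Fin.sum_univ_two, Matrix.vecHead, Matrix.vecTail]

lemma ev_eq (v : EuclideanSpace ℝ (Fin 2)) : v = ev (v 0) (v 1) := by
  ext i
  fin_cases i <;> simp [ev]

lemma quad_bound (α β γ y p q : ℝ) (h1 : α*γ - β^2 = 1) (hy1 : 1 ≤ y)
    (hy : y^4 + 1 = (α+γ)*y^2) :
    α*p^2 + 2*β*p*q + γ*q^2 ≤ y^2*(p^2+q^2) := by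
  have hy0 : 0 < y := lt_of_lt_of_le one_pos hy1
  have hy2 : 0 < y^2 := pow_pos hy0 2
  have hprod : (y^2-α)*(y^2-γ) = β^2 := by linear_combination hy + h1
  have hsum : α + γ ≤ 2*y^2 := by nlinarith [sq_nonneg (y^2-1)]
  have hα : α ≤ y^2 := by nlinarith [sq_nonneg β]
  rcases eq_or_lt_of_le hα with heq | hlt
  · have hβ2 : β^2 = 0 := by linear_combination -hprod - (y^2-γ)*heq
    have hβ : β = 0 := by
      have := sq_nonneg β; nlinarith
    rw [hβ, ← heq]
    nlinarith [mul_nonneg (by linarith : (0:ℝ) ≤ y^2 - γ) (sq_nonneg q)]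
  · nlinarith [sq_nonneg ((y^2-α)*p - β*q), hprod, hlt, sq_nonneg q]

/-- Abstract computation of the operator norm of a 2×2 matrix with determinant 1. -/
lemma opNorm_eq_of (B : Matrix (Fin 2) (Fin 2) ℝ) (y : ℝ) (hy1 : 1 ≤ y)
    (hdet : B 0 0 * B 1 1 - B 0 1 * B 1 0 = 1)
    (hykey : y^4 + 1 = (B 0 0^2 + B 0 1^2 + B 1 0^2 + B 1 1^2) * y^2) :
    opNorm B = y := by
  set a : ℝ := B 0 0
  set b : ℝ := B 0 1
  set c : ℝ := B 1 0
  set d : ℝ := B 1 1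
  have hy0 : 0 < y := lt_of_lt_of_le one_pos hy1
  have h1 : (a^2+c^2)*(b^2+d^2) - (a*b+c*d)^2 = 1 := by nlinarith [hdet]
  have hykey' : y^4 + 1 = ((a^2+c^2) + (b^2+d^2)) * y^2 := by linear_combination hykey
  refine le_antisymm ?_ ?_
  · apply ContinuousLinearMap.opNorm_le_bound _ (le_of_lt hy0)
    intro v
    rw [ev_eq v, ev_apply, ev_norm, ev_norm]
    rw [← Real.sqrt_sq (le_of_lt hy0), ← Real.sqrt_mul (sq_nonneg y)]
    apply Real.sqrt_le_sqrt
    have := quad_bound (a^2+c^2) (a*b+c*d) (b^2+d^2) y (v 0) (v 1) h1 hy1 hykey'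
    nlinarith [this]
  · set T := Matrix.toEuclideanCLM (𝕜 := ℝ) B with hT
    have hprod : (y^2-(a^2+c^2))*(y^2-(b^2+d^2)) = (a*b+c*d)^2 := by
      linear_combination hykey' + h1
    by_cases hcase : y^2 = a^2+c^2
    · have hv : T (ev 1 0) = ev a c := by
        rw [hT, ev_apply]
        norm_num
        rfl
      have h6 : ‖T (ev 1 0)‖ = y := by
        rw [hv, ev_norm, ← hcase, Real.sqrt_sq (le_of_lt hy0)]
      have h7 := T.le_opNorm (ev 1 0)
      rw [h6, ev_norm] at h7
      have : Real.sqrt (1^2 + 0^2) = 1 := by norm_num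
      rw [this, mul_one] at h7
      exact h7
    · set β : ℝ := a*b+c*d with hβ
      set s : ℝ := y^2 - (a^2+c^2) with hs
      have hwne : β^2 + s^2 ≠ 0 := by
        intro h
        have hs0 : s = 0 := by nlinarith [sq_nonneg β, sq_nonneg s]
        exact hcase (by rw [hs] at hs0; linarith)
      have hwpos : 0 < β^2 + s^2 := by
        rcases lt_or_eq_of_le (by positivity : (0:ℝ) ≤ β^2 + s^2) with h | h
        · exact h
        · exact absurd h.symm hwne
      have hTw : ‖T (ev β s)‖ = y * ‖ev β s‖ := by
        rw [hT, ev_apply, ev_norm, ev_norm]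
        rw [← Real.sqrt_sq (le_of_lt hy0), ← Real.sqrt_mul (sq_nonneg y)]
        congr 1
        rw [hβ, hs]
        linear_combination (a^2+c^2-y^2) * hprod
      have h7 := T.le_opNorm (ev β s)
      rw [hTw] at h7
      have hwn : 0 < ‖ev β s‖ := by
        rw [ev_norm]
        exact Real.sqrt_pos.mpr hwpos
      exact le_of_mul_le_mul_right h7 hwn

/-- For every `A ∈ SL(2,ℝ)`, the operator norm of `A` equals `e^{d(A·i, i)/2}`,
where `A` acts on the upper half-plane by Möbius transformations and `d` is the
hyperbolic distance (curvature −1). -/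
theorem norm_eq_exp_half_dist (A : Matrix.SpecialLinearGroup (Fin 2) ℝ) :
    opNorm (A : Matrix (Fin 2) (Fin 2) ℝ)
      = Real.exp (dist (A • UpperHalfPlane.I) UpperHalfPlane.I / 2) := by
  set a : ℝ := A 0 0 with ha
  set b : ℝ := A 0 1 with hb
  set c : ℝ := A 1 0 with hc
  set d : ℝ := A 1 1 with hd
  have hdet : a * d - b * c = 1 := by
    have := A.2
    rw [Matrix.det_fin_two] at this
    exact this
  have hn2 : c^2 + d^2 ≠ 0 := by
    intro h
    have h1 : c = 0 := by nlinarith [sq_nonneg c, sq_nonneg d]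
    have h2 : d = 0 := by nlinarith [sq_nonneg c, sq_nonneg d]
    rw [h1, h2] at hdet; simp at hdet
  -- coordinates of A • I
  have hz : ((A • UpperHalfPlane.I : UpperHalfPlane) : ℂ)
      = (((a*c + b*d)/(c^2 + d^2) : ℝ) : ℂ) + ((1/(c^2 + d^2) : ℝ) : ℂ) * Complex.I := by
    have hdetC : ((a:ℂ)) * ((d:ℂ)) - ((b:ℂ)) * ((c:ℂ)) = 1 := by
      exact_mod_cast congrArg Complex.ofReal hdet
    rw [UpperHalfPlane.specialLinearGroup_apply]
    simp only [UpperHalfPlane.coe_mk, UpperHalfPlane.coe_I, RingHom.id_apply, Algebra.algebraMap_self]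
    have hn2c : (((c:ℝ)^2 + d^2 : ℝ):ℂ) ≠ 0 := by exact_mod_cast hn2
    push_cast
    push_cast at hn2c
    have hnden : (c:ℂ) * Complex.I + (d:ℂ) ≠ 0 := by
      intro h
      rw [Complex.ext_iff] at h
      simp at h
      exact hn2 (by rw [h.1, h.2]; ring)
    rw [← ha, ← hb, ← hc, ← hd]
    have hnden' : Complex.I * (c:ℂ) + (d:ℂ) ≠ 0 := by rw [mul_comm]; exact hnden
    field_simp
    linear_combination (Complex.I * (d:ℂ) - (c:ℂ)) * hdetC + (-(c:ℂ)) * Complex.I_sq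
  set D : ℝ := dist (A • UpperHalfPlane.I) UpperHalfPlane.I with hD
  have hD0 : 0 ≤ D := dist_nonneg
  set y : ℝ := Real.exp (D / 2) with hy
  have hy1 : 1 ≤ y := Real.one_le_exp (by linarith)
  have hy0 : 0 < y := lt_of_lt_of_le one_pos hy1
  have hysq : y^2 = Real.exp D := by
    rw [hy, sq, ← Real.exp_add]
    congr 1
    ring
  have hre : (A • UpperHalfPlane.I : UpperHalfPlane).re = (a*c + b*d)/(c^2 + d^2) := by
    rw [← UpperHalfPlane.coe_re, hz, Complex.add_re, Complex.ofReal_re, Complex.mul_re,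
      Complex.ofReal_re, Complex.ofReal_im, Complex.I_re, Complex.I_im]
    ring
  have him : (A • UpperHalfPlane.I : UpperHalfPlane).im = 1/(c^2 + d^2) := by
    rw [← UpperHalfPlane.coe_im, hz, Complex.add_im, Complex.ofReal_im, Complex.mul_im,
      Complex.ofReal_re, Complex.ofReal_im, Complex.I_re, Complex.I_im]
    ring
  have hcosh : Real.cosh D = (a^2 + b^2 + c^2 + d^2) / 2 := by
    rw [hD, UpperHalfPlane.cosh_dist]
    have hdsq : dist ((A • UpperHalfPlane.I : UpperHalfPlane) : ℂ)
          ((UpperHalfPlane.I : UpperHalfPlane) : ℂ) ^ 2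
        = ((a*c + b*d)/(c^2 + d^2))^2 + (1/(c^2 + d^2) - 1)^2 := by
      rw [UpperHalfPlane.coe_I, Complex.dist_eq, Complex.sq_norm, Complex.normSq_apply,
        Complex.sub_re, Complex.sub_im, UpperHalfPlane.coe_re, UpperHalfPlane.coe_im,
        hre, him, Complex.I_re, Complex.I_im]
      ring
    rw [hdsq, him, UpperHalfPlane.I_im]
    field_simp
    linear_combination (-(a*d-b*c+1)) * hdet
  -- the key quadratic relation on y
  have hykey : y^4 + 1 = (a^2 + b^2 + c^2 + d^2) * y^2 := by
    have h2 : Real.exp D + Real.exp (-D) = 2 * Real.cosh D := by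
      rw [Real.cosh_eq]; ring
    have h3 : Real.exp (-D) = (y^2)⁻¹ := by rw [hysq, ← Real.exp_neg]
    rw [← hysq, h3, hcosh] at h2
    have h5 : y^2 ≠ 0 := by positivity
    field_simp at h2
    nlinarith [h2]
  exact opNorm_eq_of (A : Matrix (Fin 2) (Fin 2) ℝ) y hy1 hdet hykey
end

section
/- There exists a continuous map Φ : 𝔻 × 𝔻 → SL(2,ℝ) such that for all p₁, p₂ in the Poincaré disk 𝔻, Φ(p₁,p₂) · p₁ = p₂ and ‖Φ(p₁,p₂) − Id‖ ≤ e^{d(p₁,p₂)/2} − 1, where d is the hyperbolic distance on 𝔻. -/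
namespace AdjAux

open Real UpperHalfPlane

/-- The normalizing determinant. -/
noncomputable def Dd (x y u v : ℝ) : ℝ :=
  2*v^2*y^2 + v*y*(1 + (x^2+y^2)*(u^2+v^2) + 2*u*x)

lemma Dd_pos {y v : ℝ} (hy : 0 < y) (hv : 0 < v) (x u : ℝ) : 0 < Dd x y u v := by
  have h : Dd x y u v
      = 2*v^2*y^2 + v*y*((1+u*x)^2 + (x*v)^2 + (y*u)^2 + (y*v)^2) := by
    unfold Dd; ring
  nlinarith [mul_pos hv hy, sq_nonneg (1+u*x), sq_nonneg (x*v), sq_nonneg (y*u),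
    sq_nonneg (y*v), mul_pos (mul_pos hv hy) (mul_pos hv hy)]

noncomputable def entA (x y u v : ℝ) : ℝ := (v + y*(u^2+v^2)) / Real.sqrt (Dd x y u v)
noncomputable def entB (x y u v : ℝ) : ℝ := (u*y - v*x) / Real.sqrt (Dd x y u v)
noncomputable def entC (x y u v : ℝ) : ℝ := (v*(x^2+y^2) + y) / Real.sqrt (Dd x y u v)

noncomputable def mat (z w : UpperHalfPlane) : Matrix (Fin 2) (Fin 2) ℝ :=
  !![entA (z:ℂ).re (z:ℂ).im (w:ℂ).re (w:ℂ).im, entB (z:ℂ).re (z:ℂ).im (w:ℂ).re (w:ℂ).im;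
     entB (z:ℂ).re (z:ℂ).im (w:ℂ).re (w:ℂ).im, entC (z:ℂ).re (z:ℂ).im (w:ℂ).re (w:ℂ).im]

lemma det_aux {x y u v : ℝ} (hy : 0 < y) (hv : 0 < v) :
    entA x y u v * entC x y u v - entB x y u v * entB x y u v = 1 := by
  have hD := Dd_pos hy hv x u
  have hs : Real.sqrt (Dd x y u v) ^ 2 = Dd x y u v := Real.sq_sqrt hD.le
  have hs0 : Real.sqrt (Dd x y u v) ≠ 0 := by positivity
  unfold entA entB entC
  rw [div_mul_div_comm, div_mul_div_comm, div_sub_div_same, Real.mul_self_sqrt hD.le]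
  have h2 : (v + y*(u^2+v^2)) * (v*(x^2+y^2) + y) - (u*y - v*x) * (u*y - v*x)
      = Dd x y u v := by unfold Dd; ring
  rw [h2, div_self hD.ne']

lemma mat_det (z w : UpperHalfPlane) : (mat z w).det = 1 := by
  rw [mat, Matrix.det_fin_two_of]
  exact det_aux z.im_pos w.im_pos

noncomputable def Phi (z w : UpperHalfPlane) : Matrix.SpecialLinearGroup (Fin 2) ℝ :=
  ⟨mat z w, mat_det z w⟩

lemma cont : Continuous (fun p : UpperHalfPlane × UpperHalfPlane => mat p.1 p.2) := by
  have hx : Continuous (fun p : UpperHalfPlane × UpperHalfPlane => ((p.1 : ℂ)).re) :=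
    Complex.continuous_re.comp (UpperHalfPlane.continuous_coe.comp continuous_fst)
  have hy : Continuous (fun p : UpperHalfPlane × UpperHalfPlane => ((p.1 : ℂ)).im) :=
    Complex.continuous_im.comp (UpperHalfPlane.continuous_coe.comp continuous_fst)
  have hu : Continuous (fun p : UpperHalfPlane × UpperHalfPlane => ((p.2 : ℂ)).re) :=
    Complex.continuous_re.comp (UpperHalfPlane.continuous_coe.comp continuous_snd)
  have hv : Continuous (fun p : UpperHalfPlane × UpperHalfPlane => ((p.2 : ℂ)).im) :=
    Complex.continuous_im.comp (UpperHalfPlane.continuous_coe.comp continuous_snd)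
  have hD : Continuous (fun p : UpperHalfPlane × UpperHalfPlane =>
      Dd ((p.1 : ℂ)).re ((p.1 : ℂ)).im ((p.2 : ℂ)).re ((p.2 : ℂ)).im) := by
    unfold Dd; fun_prop
  have hs : Continuous (fun p : UpperHalfPlane × UpperHalfPlane =>
      Real.sqrt (Dd ((p.1 : ℂ)).re ((p.1 : ℂ)).im ((p.2 : ℂ)).re ((p.2 : ℂ)).im)) :=
    Real.continuous_sqrt.comp hD
  have hne : ∀ p : UpperHalfPlane × UpperHalfPlane,
      Real.sqrt (Dd ((p.1 : ℂ)).re ((p.1 : ℂ)).im ((p.2 : ℂ)).re ((p.2 : ℂ)).im) ≠ 0 := by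
    intro p
    have := Dd_pos p.1.im_pos p.2.im_pos ((p.1 : ℂ)).re ((p.2 : ℂ)).re
    positivity
  have hA : Continuous (fun p : UpperHalfPlane × UpperHalfPlane =>
      entA ((p.1 : ℂ)).re ((p.1 : ℂ)).im ((p.2 : ℂ)).re ((p.2 : ℂ)).im) := by
    unfold entA; exact Continuous.div (by fun_prop) hs hne
  have hB : Continuous (fun p : UpperHalfPlane × UpperHalfPlane =>
      entB ((p.1 : ℂ)).re ((p.1 : ℂ)).im ((p.2 : ℂ)).re ((p.2 : ℂ)).im) := by
    unfold entB; exact Continuous.div (by fun_prop) hs hne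
  have hC : Continuous (fun p : UpperHalfPlane × UpperHalfPlane =>
      entC ((p.1 : ℂ)).re ((p.1 : ℂ)).im ((p.2 : ℂ)).re ((p.2 : ℂ)).im) := by
    unfold entC; exact Continuous.div (by fun_prop) hs hne
  apply continuous_matrix
  intro i j
  fin_cases i <;> fin_cases j <;> simp only [mat, Matrix.of_apply, Matrix.cons_val',
    Matrix.cons_val_zero, Matrix.cons_val_one, Matrix.head_cons, Matrix.empty_val',
    Matrix.cons_val_fin_one, Matrix.head_fin_const, Fin.isValue, Fin.zero_eta, Fin.mk_one]
  · exact hA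
  · exact hB
  · exact hB
  · exact hC

lemma smul_eq (z w : UpperHalfPlane) : Phi z w • z = w := by
  set x := ((z : ℂ)).re with hxdef
  set y := ((z : ℂ)).im with hydef
  set u := ((w : ℂ)).re with hudef
  set v := ((w : ℂ)).im with hvdef
  have hy : 0 < y := z.im_pos
  have hv : 0 < v := w.im_pos
  have hD := Dd_pos hy hv x u
  have hs0 : Real.sqrt (Dd x y u v) ≠ 0 := by positivity
  have hA : (Phi z w) 0 0 = entA x y u v := rfl
  have hB' : (Phi z w) 0 1 = entB x y u v := rfl
  have hB : (Phi z w) 1 0 = entB x y u v := rfl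
  have hC : (Phi z w) 1 1 = entC x y u v := rfl
  have hden : ((entB x y u v : ℂ)) * (z : ℂ) + ((entC x y u v : ℂ)) ≠ 0 := by
    intro h
    have him : entB x y u v * y = 0 := by
      have := congrArg Complex.im h
      exact (by simpa [Complex.add_im, Complex.mul_im] using this : entB x y u v * z.im = 0)
    have hB0 : entB x y u v = 0 := by
      rcases mul_eq_zero.1 him with h' | h'
      · exact h'
      · exact absurd h' hy.ne'
    have hre : entB x y u v * x + entC x y u v = 0 := by
      have := congrArg Complex.re h
      exact (by simpa [Complex.add_re, Complex.mul_re] using this : entB x y u v * z.re + entC x y u v = 0)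
    have hC0 : entC x y u v = 0 := by simpa [hB0] using hre
    have := det_aux (x := x) (y := y) (u := u) (v := v) hy hv
    rw [hB0, hC0] at this
    simp at this
  rw [UpperHalfPlane.specialLinearGroup_apply]
  apply UpperHalfPlane.ext
  rw [UpperHalfPlane.coe_mk]
  simp only [Algebra.algebraMap_self_apply]
  have key : ((entA x y u v : ℂ)) * (z : ℂ) + ((entB x y u v : ℂ))
      = (w : ℂ) * (((entB x y u v : ℂ)) * (z : ℂ) + ((entC x y u v : ℂ))) := by
    unfold entA entB entC
    apply Complex.ext
    · simp only [Complex.add_re, Complex.mul_re, Complex.ofReal_re, Complex.ofReal_im,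
        Complex.add_im, Complex.mul_im]
      field_simp
      simp only [← UpperHalfPlane.coe_re, ← UpperHalfPlane.coe_im, ← hxdef, ← hydef,
        ← hudef, ← hvdef]
      ring
    · simp only [Complex.add_re, Complex.mul_re, Complex.ofReal_re, Complex.ofReal_im,
        Complex.add_im, Complex.mul_im]
      field_simp
      simp only [← UpperHalfPlane.coe_re, ← UpperHalfPlane.coe_im, ← hxdef, ← hydef,
        ← hudef, ← hvdef]
      ring
  rw [hA, hB', hB, hC, div_eq_iff hden]
  exact key

lemma quad {a b c L p q : ℝ} (ha : 0 < a) (hdet : a*c - b*b = 1) (hL : 1 ≤ L)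
    (htr : a + c ≤ L + 1/L) :
    ((a-1)*p + b*q)^2 + (b*p + (c-1)*q)^2 ≤ (L-1)^2 * (p^2+q^2) := by
  have hL0 : 0 < L := by linarith
  have hc : 0 < c := by nlinarith [sq_nonneg b]
  have hid : ((a-1)*p + b*q)^2 + (b*p + (c-1)*q)^2
      = (a+c-2)*(a*p^2 + 2*b*p*q + c*q^2) := by
    linear_combination (-(p^2+q^2)) * hdet
  rw [hid]
  have hQ : 0 ≤ a*p^2 + 2*b*p*q + c*q^2 := by nlinarith [sq_nonneg (a*p + b*q), sq_nonneg q]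
  have hT2 : 2 ≤ a + c := by nlinarith [sq_nonneg (a - c), sq_nonneg b]
  have hinv : L * (1/L) = 1 := mul_one_div_cancel hL0.ne'
  have hW : 0 ≤ L^2 + 1 - (a+c)*L := by nlinarith [mul_le_mul_of_nonneg_right htr hL0.le]
  have h2LT : 0 ≤ 2*L - (a+c) := by nlinarith
  nlinarith [mul_nonneg hQ hW, sq_nonneg ((L-a)*p - b*q), sq_nonneg ((L-c)*q - b*p),
    mul_nonneg hW (add_nonneg (sq_nonneg p) (sq_nonneg q)), mul_nonneg h2LT hQ,
    sq_nonneg (L-1), mul_nonneg (mul_nonneg h2LT hQ) hW]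

lemma trace_le (z w : UpperHalfPlane) :
    entA ((z:ℂ)).re ((z:ℂ)).im ((w:ℂ)).re ((w:ℂ)).im
      + entC ((z:ℂ)).re ((z:ℂ)).im ((w:ℂ)).re ((w:ℂ)).im
    ≤ Real.exp (dist z w / 2) + Real.exp (-(dist z w / 2)) := by
  set x := ((z : ℂ)).re with hxdef
  set y := ((z : ℂ)).im with hydef
  set u := ((w : ℂ)).re with hudef
  set v := ((w : ℂ)).im with hvdef
  have hy : 0 < y := z.im_pos
  have hv : 0 < v := w.im_pos
  have hyv : 0 < y * v := mul_pos hy hv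
  have hD := Dd_pos hy hv x u
  have hsD : 0 < Real.sqrt (Dd x y u v) := Real.sqrt_pos.mpr hD
  rw [UpperHalfPlane.dist_eq]
  set ρ := dist (z : ℂ) (w : ℂ) / (2 * Real.sqrt (z.im * w.im)) with hρdef
  have hρ0 : 0 ≤ ρ := by
    rw [hρdef]; positivity
  have h2 : 2 * Real.arsinh ρ / 2 = Real.arsinh ρ := by ring
  rw [h2]
  have hcosh : Real.exp (Real.arsinh ρ) + Real.exp (-Real.arsinh ρ)
      = 2 * Real.sqrt (1 + ρ^2) := by
    rw [← Real.cosh_arsinh, Real.cosh_eq]; ring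
  rw [hcosh]
  have hE : dist (z:ℂ) (w:ℂ) ^ 2 = (x-u)^2 + (y-v)^2 := by
    rw [Complex.dist_eq_re_im, Real.sq_sqrt (by positivity)]
  have him : z.im * w.im = y * v := rfl
  have hρ2 : ρ^2 = ((x-u)^2 + (y-v)^2) / (4*(y*v)) := by
    rw [hρdef, him, div_pow, mul_pow, Real.sq_sqrt hyv.le, hE]
    norm_num
  have hS : entA x y u v + entC x y u v
      = (v + y*(u^2+v^2) + (v*(x^2+y^2) + y)) / Real.sqrt (Dd x y u v) := by
    unfold entA entC; rw [← add_div]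
  rw [hS]
  set S := v + y*(u^2+v^2) + (v*(x^2+y^2) + y) with hSdef
  have hS0 : 0 ≤ S := by positivity
  have key : (4*(y*v) + ((x-u)^2 + (y-v)^2)) * Dd x y u v - S^2 * (y*v)
      = y*v*(u*(1-y^2) - x*(1-v^2) + x*u*(u-x))^2 := by
    rw [hSdef]; unfold Dd; ring
  have hmain : S^2 ≤ 4*(1+ρ^2) * Dd x y u v := by
    have h44 : 4*(1+ρ^2) = (4*(y*v) + ((x-u)^2 + (y-v)^2)) / (y*v) := by
      rw [hρ2]; field_simp
    rw [h44, div_mul_eq_mul_div, le_div_iff₀ hyv]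
    nlinarith [mul_nonneg hyv.le (sq_nonneg (u*(1-y^2) - x*(1-v^2) + x*u*(u-x)))]
  calc S / Real.sqrt (Dd x y u v)
      = Real.sqrt (S^2 / Dd x y u v) := by
        rw [Real.sqrt_div (sq_nonneg S), Real.sqrt_sq hS0]
    _ ≤ Real.sqrt (4*(1+ρ^2)) := Real.sqrt_le_sqrt ((div_le_iff₀ hD).mpr hmain)
    _ = 2 * Real.sqrt (1+ρ^2) := by
        rw [show (4:ℝ)*(1+ρ^2) = 2^2*(1+ρ^2) by norm_num,
          Real.sqrt_mul (by positivity), Real.sqrt_sq (by norm_num)]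

lemma norm_le (z w : UpperHalfPlane) :
    opNorm ((Phi z w : Matrix (Fin 2) (Fin 2) ℝ) - 1) ≤ Real.exp (dist z w / 2) - 1 := by
  set x := ((z : ℂ)).re with hxdef
  set y := ((z : ℂ)).im with hydef
  set u := ((w : ℂ)).re with hudef
  set v := ((w : ℂ)).im with hvdef
  have hy : 0 < y := z.im_pos
  have hv : 0 < v := w.im_pos
  have hD := Dd_pos hy hv x u
  set L := Real.exp (dist z w / 2) with hLdef
  have hL : 1 ≤ L := Real.one_le_exp (by positivity)
  have htr : entA x y u v + entC x y u v ≤ L + 1/L := by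
    have := trace_le z w
    rwa [Real.exp_neg, ← hLdef, ← one_div] at this
  have ha : 0 < entA x y u v := by
    unfold entA
    have : 0 < v + y*(u^2+v^2) := by positivity
    positivity
  have hdet := det_aux (x := x) (y := y) (u := u) (v := v) hy hv
  set M := (Phi z w : Matrix (Fin 2) (Fin 2) ℝ) - 1 with hMdef
  have e00 : M 0 0 = entA x y u v - 1 := by
    rw [hMdef, Matrix.sub_apply, Matrix.one_apply_eq]; rfl
  have e01 : M 0 1 = entB x y u v := by
    rw [hMdef, Matrix.sub_apply, Matrix.one_apply_ne (by decide)]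
    show entB x y u v - 0 = _; ring
  have e10 : M 1 0 = entB x y u v := by
    rw [hMdef, Matrix.sub_apply, Matrix.one_apply_ne (by decide)]
    show entB x y u v - 0 = _; ring
  have e11 : M 1 1 = entC x y u v - 1 := by
    rw [hMdef, Matrix.sub_apply, Matrix.one_apply_eq]; rfl
  rw [opNorm]
  refine ContinuousLinearMap.opNorm_le_bound _ (by linarith) (fun ξ => ?_)
  have happ : ∀ i, (Matrix.toEuclideanCLM (𝕜 := ℝ) M) ξ i = M.mulVec (fun j => ξ j) i := by
    intro i; rfl
  rw [EuclideanSpace.norm_eq, EuclideanSpace.norm_eq]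
  simp only [happ, Fin.sum_univ_two, Real.norm_eq_abs, sq_abs]
  have hmv0 : M.mulVec (fun j => ξ j) 0 = (entA x y u v - 1) * ξ 0 + entB x y u v * ξ 1 := by
    simp [Matrix.mulVec, dotProduct, Fin.sum_univ_two, e00, e01]
  have hmv1 : M.mulVec (fun j => ξ j) 1 = entB x y u v * ξ 0 + (entC x y u v - 1) * ξ 1 := by
    simp [Matrix.mulVec, dotProduct, Fin.sum_univ_two, e10, e11]
  rw [hmv0, hmv1]
  have hquad := quad (p := ξ 0) (q := ξ 1) ha hdet hL htr
  calc Real.sqrt (((entA x y u v - 1) * ξ 0 + entB x y u v * ξ 1)^2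
        + (entB x y u v * ξ 0 + (entC x y u v - 1) * ξ 1)^2)
      ≤ Real.sqrt ((L-1)^2 * ((ξ 0)^2 + (ξ 1)^2)) := Real.sqrt_le_sqrt hquad
    _ = (L - 1) * Real.sqrt ((ξ 0)^2 + (ξ 1)^2) := by
        rw [Real.sqrt_mul (sq_nonneg _), Real.sqrt_sq (by linarith)]

end AdjAux

/-- Disk adjustment lemma (stated in the upper half-plane model, which is isometric
to the Poincaré disk via the Cayley transform): there is a continuous map
`Φ : ℍ × ℍ → SL(2,ℝ)` with `Φ(p₁,p₂)·p₁ = p₂` and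
`‖Φ(p₁,p₂) − Id‖ ≤ e^{d(p₁,p₂)/2} − 1`. -/
theorem exists_adjustment_map :
    ∃ Φ : UpperHalfPlane × UpperHalfPlane → Matrix.SpecialLinearGroup (Fin 2) ℝ,
      Continuous (fun p => (Φ p : Matrix (Fin 2) (Fin 2) ℝ)) ∧
      (∀ p₁ p₂ : UpperHalfPlane, Φ (p₁, p₂) • p₁ = p₂) ∧
      (∀ p₁ p₂ : UpperHalfPlane,
        opNorm ((Φ (p₁, p₂) : Matrix (Fin 2) (Fin 2) ℝ) - 1)
          ≤ Real.exp (dist p₁ p₂ / 2) - 1) := by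
  refine ⟨fun p => AdjAux.Phi p.1 p.2, AdjAux.cont, AdjAux.smul_eq, AdjAux.norm_le⟩
end

section
/- In the hyperbolic plane, the summit of a Saccheri quadrilateral is strictly longer than its base: if p₁q₁q₂p₂ is a quadrilateral with right angles at q₁ and q₂, equal leg lengths d(p₁,q₁) = d(p₂,q₂) > 0, then d(p₁,p₂) > d(q₁,q₂). -/
open UpperHalfPlane

section SaccheriAux

open Real UpperHalfPlane

/-- The cosh identity for three "collinear" parameters. -/
lemma cosh_ident (A D : ℝ) :
    2 * cosh A * cosh (A - D) * cosh D = cosh A ^ 2 + cosh (A - D) ^ 2 + cosh D ^ 2 - 1 := by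
  rw [Real.cosh_sub]
  have h1 := Real.cosh_sq_sub_sinh_sq A
  have h2 := Real.cosh_sq_sub_sinh_sq D
  nlinarith [h1, h2]

/-- Algebraic heart of the geodesic classification: a point at prescribed collinear
distances from two distinct points of the imaginary axis lies on the axis. -/
lemma foot_x_eq_zero (x y a b C1 C2 C3 : ℝ) (ha : a ≠ b)
    (h1 : 2 * y * a * C1 = x ^ 2 + y ^ 2 + a ^ 2)
    (h2 : 2 * y * b * C2 = x ^ 2 + y ^ 2 + b ^ 2)
    (h3 : 2 * a * b * C3 = a ^ 2 + b ^ 2)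
    (hident : 2 * C1 * C2 * C3 = C1 ^ 2 + C2 ^ 2 + C3 ^ 2 - 1)
    (ha2 : a ^ 2 ≠ b ^ 2) : x = 0 := by
  have key : (a ^ 2 - b ^ 2) ^ 2 * x ^ 2 = 0 := by
    linear_combination (4*y^2*a^2*b^2) * hident
      + (b^2*((x^2+y^2+a^2) + 2*y*a*C1) - (a^2+b^2)*(x^2+y^2+b^2)) * h1
      + (a^2*((x^2+y^2+b^2) + 2*y*b*C2) - 2*y*a*(a^2+b^2)*C1) * h2
      + (y^2*((a^2+b^2) + 2*a*b*C3) - 4*y^2*a*b*C1*C2) * h3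
  have h := sub_ne_zero.mpr ha2
  have : x ^ 2 = 0 := by
    rcases mul_eq_zero.mp key with h' | h'
    · exact absurd (pow_eq_zero_iff two_ne_zero |>.mp h') h
    · exact h'
  exact pow_eq_zero_iff two_ne_zero |>.mp this

lemma cosh_dist_coords (z w : ℍ) :
    cosh (dist z w) = 1 + ((z.re - w.re) ^ 2 + (z.im - w.im) ^ 2) / (2 * z.im * w.im) := by
  rw [UpperHalfPlane.cosh_dist]
  congr 1
  congr 1
  rw [Complex.dist_eq_re_im, sq_sqrt (by positivity)]
  simp [UpperHalfPlane.coe_re, UpperHalfPlane.coe_im]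

lemma foot_analysis (p q : ℍ) (hq : q.re = 0)
    (hfoot : ∀ v : ℝ, dist p q ≤ dist p (mk ⟨0, exp v⟩ (exp_pos v))) :
    p.re ^ 2 + p.im ^ 2 = q.im ^ 2 ∧ cosh (dist p q) = q.im / p.im := by
  set x := p.re with hx
  set y := p.im with hy
  set E := q.im with hE
  have hy0 : 0 < y := p.im_pos
  have hE0 : 0 < E := q.im_pos
  have hK : 0 < x ^ 2 + y ^ 2 := by positivity
  set K := x ^ 2 + y ^ 2 with hKdef
  set S := Real.sqrt K with hS
  have hS0 : 0 < S := Real.sqrt_pos.mpr hK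
  have hS2 : S ^ 2 = K := Real.sq_sqrt hK.le
  -- cosh of dist to a point on the axis at height exp v
  have hpt : ∀ v : ℝ, cosh (dist p (mk ⟨0, exp v⟩ (exp_pos v))) =
      1 + (x ^ 2 + (y - exp v) ^ 2) / (2 * y * exp v) := by
    intro v
    rw [cosh_dist_coords]
    have h1 : (mk ⟨0, exp v⟩ (exp_pos v)).re = 0 := rfl
    have h2 : (mk ⟨0, exp v⟩ (exp_pos v)).im = exp v := rfl
    rw [h1, h2, sub_zero]
  have hcq : cosh (dist p q) = 1 + (x ^ 2 + (y - E) ^ 2) / (2 * y * E) := by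
    rw [cosh_dist_coords, hq, sub_zero]
  -- use the foot inequality at v = log S
  have hlog : exp (Real.log S) = S := Real.exp_log hS0
  have hineq := hfoot (Real.log S)
  have hineq2 : cosh (dist p q) ≤ cosh (dist p (mk ⟨0, exp (Real.log S)⟩ (exp_pos _))) :=
    Real.cosh_le_cosh.mpr (by rwa [abs_of_nonneg dist_nonneg, abs_of_nonneg dist_nonneg])
  rw [hpt, hlog, hcq] at hineq2
  -- derive S = E
  have hSE : S = E := by
    have h3 : (x ^ 2 + (y - E) ^ 2) / (2 * y * E) ≤ (x ^ 2 + (y - S) ^ 2) / (2 * y * S) := by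
      linarith
    rw [div_le_div_iff₀ (by positivity) (by positivity)] at h3
    have hx2 : x ^ 2 = S ^ 2 - y ^ 2 := by rw [hS2, hKdef]; ring
    have h3' : (S ^ 2 - y ^ 2 + (y - E) ^ 2) * (2 * y * S)
        ≤ (S ^ 2 - y ^ 2 + (y - S) ^ 2) * (2 * y * E) := by rw [← hx2]; exact h3
    have h5 : (S - E) ^ 2 ≤ 0 := by nlinarith [mul_pos hy0 hS0]
    have h6 : (S - E) ^ 2 = 0 := le_antisymm h5 (sq_nonneg _)
    have h7 := pow_eq_zero_iff two_ne_zero |>.mp h6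
    linarith
  have hKE : x ^ 2 + y ^ 2 = E ^ 2 := by rw [← hKdef, ← hS2, hSE]
  refine ⟨hKE, ?_⟩
  rw [hcq]
  field_simp
  nlinarith [hKE]

/-- Inversion `z ↦ -1/z` on the upper half-plane. -/
noncomputable def invH (z : ℍ) : ℍ := mk (-(z : ℂ))⁻¹ z.im_inv_neg_coe_pos

lemma isometry_invH : Isometry invH :=
  Isometry.of_dist_eq fun y₁ y₂ => by
    have h₁ : 0 ≤ UpperHalfPlane.im y₁ * UpperHalfPlane.im y₂ :=
      mul_nonneg y₁.im_pos.le y₂.im_pos.le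
    have h₂ : ‖((y₁ : ℂ) * y₂)‖ ≠ 0 := by simp [y₁.ne_zero, y₂.ne_zero]
    simp only [invH, UpperHalfPlane.dist_eq, coe_mk, mk_im, inv_neg, neg_div,
      div_mul_div_comm, div_one, Complex.inv_im, Complex.neg_im, coe_im, neg_neg,
      Complex.normSq_neg, mul_eq_mul_left_iff, Real.arsinh_inj, one_ne_zero,
      dist_neg_neg, mul_neg, neg_mul, dist_inv_inv₀ y₁.ne_zero y₂.ne_zero, ←
      norm_mul, ← Complex.normSq_mul, Real.sqrt_div h₁, ← Complex.norm_def,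
      mul_div (2 : ℝ), div_div_div_comm, div_self h₂]
    left
    rw [div_div_div_comm, div_self h₂, div_one]

lemma phi_re_eq_zero (m r : ℝ) (hr0 : 0 < r) (ζ : ℍ)
    (hζ : (ζ.re - m) ^ 2 + ζ.im ^ 2 = r ^ 2) :
    ((1 / (2 * r)) +ᵥ invH ((r - m) +ᵥ ζ)).re = 0 := by
  rw [vadd_re]
  have h1 : (invH ((r - m) +ᵥ ζ)).re = (-(((r - m) +ᵥ ζ : ℍ) : ℂ))⁻¹.re := rfl
  rw [h1, Complex.inv_re, Complex.neg_re, Complex.normSq_neg, Complex.normSq_apply, coe_vadd]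
  have hre : ((r - m : ℝ) + (ζ : ℂ)).re = r - m + ζ.re := by
    simp [Complex.add_re, coe_re]
  have him : ((r - m : ℝ) + (ζ : ℂ)).im = ζ.im := by
    simp [Complex.add_im, coe_im]
  rw [hre, him]
  have him0 : 0 < ζ.im := ζ.im_pos
  have hkey : (r - m + ζ.re) * (r - m + ζ.re) + ζ.im * ζ.im = 2 * r * (r - m + ζ.re) := by
    linear_combination hζ
  have hA : 0 < r - m + ζ.re := by nlinarith [hkey, him0, mul_pos him0 him0]
  rw [hkey]
  field_simp
  ring

/-- There is an isometry of `ℍ` carrying any two prescribed points onto the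
imaginary axis. -/
lemma exists_isometry_to_axis (z w : ℍ) :
    ∃ Φ : ℍ → ℍ, Isometry Φ ∧ (Φ z).re = 0 ∧ (Φ w).re = 0 := by
  by_cases h : z.re = w.re
  · refine ⟨fun ζ => (-z.re) +ᵥ ζ, isometry_real_vadd _, ?_, ?_⟩
    · rw [vadd_re]; ring
    · rw [vadd_re, ← h]; ring
  · set m : ℝ := (z.re ^ 2 + z.im ^ 2 - w.re ^ 2 - w.im ^ 2) / (2 * (z.re - w.re)) with hm
    have hzw : z.re - w.re ≠ 0 := sub_ne_zero.mpr h
    set r : ℝ := Real.sqrt ((z.re - m) ^ 2 + z.im ^ 2) with hr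
    have hr0 : 0 < r := Real.sqrt_pos.mpr (by positivity)
    have hrz : (z.re - m) ^ 2 + z.im ^ 2 = r ^ 2 := (Real.sq_sqrt (by positivity)).symm
    have hrw : (w.re - m) ^ 2 + w.im ^ 2 = r ^ 2 := by
      rw [← hrz, hm]
      field_simp
      ring
    exact ⟨fun ζ => (1 / (2 * r)) +ᵥ invH ((r - m) +ᵥ ζ),
      (isometry_real_vadd _).comp (isometry_invH.comp (isometry_real_vadd _)),
      phi_re_eq_zero m r hr0 z hrz, phi_re_eq_zero m r hr0 w hrw⟩

lemma cosh_dist_eq (c : ℝ → ℍ) (hc : Isometry c) (u u' : ℝ) :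
    cosh (u - u') = 1 + (((c u).re - (c u').re) ^ 2 + ((c u).im - (c u').im) ^ 2)
      / (2 * (c u).im * (c u').im) := by
  rw [← cosh_dist_coords, hc.dist_eq, Real.dist_eq, Real.cosh_abs]

lemma geodesic_on_axis (c : ℝ → ℍ) (hc : Isometry c) (s t : ℝ) (hst : s ≠ t)
    (h1 : (c s).re = 0) (h2 : (c t).re = 0) :
    ∀ v : ℝ, ∃ u : ℝ, c u = mk ⟨0, exp v⟩ (exp_pos v) := by
  set a := (c s).im with hadef
  set b := (c t).im with hbdef
  have ha0 : 0 < a := (c s).im_pos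
  have hb0 : 0 < b := (c t).im_pos
  have hab : a ≠ b := by
    intro h
    have : c s = c t := UpperHalfPlane.ext' (h1.trans h2.symm) h
    have h' : dist s t = 0 := by rw [← hc.dist_eq, this, dist_self]
    exact hst (by rwa [dist_eq_zero] at h')
  have hab2 : a ^ 2 ≠ b ^ 2 := by
    intro h
    have h' : (a - b) * (a + b) = 0 := by linear_combination h
    rcases mul_eq_zero.mp h' with h'' | h''
    · exact hab (by linarith)
    · linarith
  -- the three distance equations
  have e3 : 2 * a * b * cosh (t - s) = a ^ 2 + b ^ 2 := by
    have := cosh_dist_eq c hc t s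
    rw [h1, h2] at this
    field_simp at this ⊢
    linear_combination this
  -- every point of the geodesic lies on the imaginary axis
  have hre : ∀ u : ℝ, (c u).re = 0 := by
    intro u
    have e1 : 2 * (c u).im * a * cosh (u - s) = (c u).re ^ 2 + (c u).im ^ 2 + a ^ 2 := by
      have := cosh_dist_eq c hc u s
      rw [h1] at this
      have him : 0 < (c u).im := (c u).im_pos
      field_simp at this
      linear_combination this
    have e2 : 2 * (c u).im * b * cosh (u - t) = (c u).re ^ 2 + (c u).im ^ 2 + b ^ 2 := by
      have := cosh_dist_eq c hc u t
      rw [h2] at this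
      have him : 0 < (c u).im := (c u).im_pos
      field_simp at this
      linear_combination this
    have hi : 2 * cosh (u - s) * cosh (u - t) * cosh (t - s)
        = cosh (u - s) ^ 2 + cosh (u - t) ^ 2 + cosh (t - s) ^ 2 - 1 := by
      have h := cosh_ident (u - s) (t - s)
      have hA : u - s - (t - s) = u - t := by ring
      rwa [hA] at h
    exact foot_x_eq_zero _ _ a b _ _ _ hab e1 e2 e3 hi hab2
  -- the log of the imaginary part is a surjective parametrization
  set w : ℝ → ℝ := fun u => Real.log (c u).im with hwdef
  have hwd : ∀ u u' : ℝ, (w u - w u') ^ 2 = (u - u') ^ 2 := by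
    intro u u'
    have hd : dist (c u) (c u') = dist (w u) (w u') :=
      UpperHalfPlane.dist_of_re_eq ((hre u).trans (hre u').symm)
    have : dist u u' = dist (w u) (w u') := by rw [← hc.dist_eq, hd]
    rw [Real.dist_eq, Real.dist_eq] at this
    calc (w u - w u') ^ 2 = |w u - w u'| ^ 2 := (sq_abs _).symm
      _ = |u - u'| ^ 2 := by rw [← this]
      _ = (u - u') ^ 2 := sq_abs _
  have hwts : w t - w s ≠ 0 := by
    intro h
    have := hwd t s
    rw [h] at this
    have h' : (t - s) ^ 2 = 0 := by nlinarith [this]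
    have h0 : t - s = 0 := pow_eq_zero_iff two_ne_zero |>.mp h'
    exact hst (sub_eq_zero.mp h0).symm
  intro v
  refine ⟨s + (v - w s) * (w t - w s) / (t - s), ?_⟩
  set u := s + (v - w s) * (w t - w s) / (t - s) with hudef
  have hts : t - s ≠ 0 := sub_ne_zero.mpr (Ne.symm hst)
  have hkey : (w u - w s) * (w t - w s) = (t - s) * (u - s) := by
    linear_combination (1/2 : ℝ) * (hwd u s - hwd u t + hwd t s)
  have hus : (t - s) * (u - s) = (v - w s) * (w t - w s) := by
    rw [hudef]
    field_simp
    ring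
  have hwu : w u = v := by
    have h' : (w u - w s) * (w t - w s) = (v - w s) * (w t - w s) := by
      rw [hkey, hus]
    have := mul_right_cancel₀ hwts h'
    linarith
  refine UpperHalfPlane.ext' ?_ ?_
  · rw [hre u]; rfl
  · show (c u).im = exp v
    rw [← hwu, hwdef]
    exact (Real.exp_log (c u).im_pos).symm

lemma saccheri_arith (x₁ y₁ x₂ y₂ E₁ E₂ c : ℝ)
    (hy₁ : 0 < y₁) (hy₂ : 0 < y₂) (hE₁ : 0 < E₁) (hE₂ : 0 < E₂) (hc1 : 1 < c)
    (hK₁ : x₁ ^ 2 + y₁ ^ 2 = E₁ ^ 2) (hK₂ : x₂ ^ 2 + y₂ ^ 2 = E₂ ^ 2)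
    (hcy₁ : E₁ = c * y₁) (hcy₂ : E₂ = c * y₂) (hne : E₁ ≠ E₂) :
    (E₁ ^ 2 + E₂ ^ 2) / (2 * E₁ * E₂) < ((x₁ - x₂) ^ 2 + y₁ ^ 2 + y₂ ^ 2) / (2 * y₁ * y₂) := by
  have hx₁sq : x₁ ^ 2 = (c ^ 2 - 1) * y₁ ^ 2 := by nlinarith [hK₁]
  have hx₂sq : x₂ ^ 2 = (c ^ 2 - 1) * y₂ ^ 2 := by nlinarith [hK₂]
  have hxne : x₁ ≠ x₂ := by
    intro h
    have hsub : x₁ - x₂ = 0 := sub_eq_zero.mpr h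
    have h9 : (c ^ 2 - 1) * (y₁ ^ 2 - y₂ ^ 2) = 0 := by
      linear_combination hx₂sq - hx₁sq + (x₁ + x₂) * hsub
    have hc2 : c ^ 2 - 1 ≠ 0 := by nlinarith
    have h10 : y₁ ^ 2 - y₂ ^ 2 = 0 := by
      rcases mul_eq_zero.mp h9 with h' | h'
      · exact absurd h' hc2
      · exact h'
    have h11 : (y₁ - y₂) * (y₁ + y₂) = 0 := by linear_combination h10
    have h12 : y₁ = y₂ := by
      rcases mul_eq_zero.mp h11 with h' | h'
      · linarith
      · linarith
    exact hne (by rw [hcy₁, hcy₂, h12])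
  have h2 : 0 < (x₁ - x₂) ^ 2 := by
    have := sub_ne_zero.mpr hxne
    positivity
  rw [div_lt_div_iff₀ (by positivity) (by positivity)]
  have h1 : (E₁ ^ 2 + E₂ ^ 2) * (2 * y₁ * y₂) = (y₁ ^ 2 + y₂ ^ 2) * (2 * E₁ * E₂) := by
    rw [hcy₁, hcy₂]; ring
  nlinarith [mul_pos hE₁ hE₂, h2, h1]

lemma saccheri_axis (p₁ q₁ q₂ p₂ : ℍ)
    (hq₁ : q₁.re = 0) (hq₂ : q₂.re = 0) (hqq : q₁ ≠ q₂)
    (hfoot₁ : ∀ v : ℝ, dist p₁ q₁ ≤ dist p₁ (mk ⟨0, exp v⟩ (exp_pos v)))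
    (hfoot₂ : ∀ v : ℝ, dist p₂ q₂ ≤ dist p₂ (mk ⟨0, exp v⟩ (exp_pos v)))
    (hleg : dist p₁ q₁ = dist p₂ q₂) (hpos : 0 < dist p₁ q₁) :
    dist q₁ q₂ < dist p₁ p₂ := by
  obtain ⟨hK₁, hc₁⟩ := foot_analysis p₁ q₁ hq₁ hfoot₁
  obtain ⟨hK₂, hc₂⟩ := foot_analysis p₂ q₂ hq₂ hfoot₂
  have hy₁ : 0 < p₁.im := p₁.im_pos
  have hy₂ : 0 < p₂.im := p₂.im_pos
  have hE₁ : 0 < q₁.im := q₁.im_pos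
  have hE₂ : 0 < q₂.im := q₂.im_pos
  have hc1 : 1 < cosh (dist p₁ q₁) := Real.one_lt_cosh.mpr hpos.ne'
  have hcy₁ : q₁.im = cosh (dist p₁ q₁) * p₁.im := by rw [hc₁]; field_simp
  have hcy₂ : q₂.im = cosh (dist p₁ q₁) * p₂.im := by rw [hleg, hc₂]; field_simp
  have hne : q₁.im ≠ q₂.im := fun h => hqq (UpperHalfPlane.ext' (hq₁.trans hq₂.symm) h)
  have hlt : cosh (dist q₁ q₂) < cosh (dist p₁ p₂) := by
    have hb : cosh (dist q₁ q₂) = (q₁.im ^ 2 + q₂.im ^ 2) / (2 * q₁.im * q₂.im) := by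
      rw [cosh_dist_coords, hq₁, hq₂]
      field_simp
      ring
    have hsummit : cosh (dist p₁ p₂)
        = ((p₁.re - p₂.re) ^ 2 + p₁.im ^ 2 + p₂.im ^ 2) / (2 * p₁.im * p₂.im) := by
      rw [cosh_dist_coords]
      field_simp
      ring
    rw [hb, hsummit]
    exact saccheri_arith p₁.re p₁.im p₂.re p₂.im q₁.im q₂.im (cosh (dist p₁ q₁))
      hy₁ hy₂ hE₁ hE₂ hc1 hK₁ hK₂ hcy₁ hcy₂ hne
  have := Real.cosh_lt_cosh.mp hlt
  rwa [abs_of_nonneg dist_nonneg, abs_of_nonneg dist_nonneg] at this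

end SaccheriAux

/-- The summit of a Saccheri quadrilateral in the hyperbolic plane (upper half-plane
model) is strictly longer than its base.  The base `q₁q₂` lies on a geodesic line
`γ` (an isometric embedding of `ℝ`), the legs have equal positive length, and the
right angles at `q₁`, `q₂` are expressed by saying that `q₁` (resp. `q₂`) is the
point of the base line nearest to `p₁` (resp. `p₂`). -/
theorem saccheri_summit_gt_base
    (p₁ q₁ q₂ p₂ : UpperHalfPlane) (γ : ℝ → UpperHalfPlane) (hγ : Isometry γ)
    (s t : ℝ) (hs : γ s = q₁) (ht : γ t = q₂) (hst : s ≠ t)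
    (hfoot₁ : ∀ u : ℝ, dist p₁ q₁ ≤ dist p₁ (γ u))
    (hfoot₂ : ∀ u : ℝ, dist p₂ q₂ ≤ dist p₂ (γ u))
    (hleg : dist p₁ q₁ = dist p₂ q₂) (hpos : 0 < dist p₁ q₁) :
    dist q₁ q₂ < dist p₁ p₂ := by
  obtain ⟨Φ, hΦ, hre1, hre2⟩ := exists_isometry_to_axis q₁ q₂
  have hcIso : Isometry (Φ ∘ γ) := hΦ.comp hγ
  have hcs : (Φ ∘ γ) s = Φ q₁ := by simp [hs]
  have hct : (Φ ∘ γ) t = Φ q₂ := by simp [ht]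
  have hsur := geodesic_on_axis (Φ ∘ γ) hcIso s t hst
    (by rw [hcs]; exact hre1) (by rw [hct]; exact hre2)
  have hqq : Φ q₁ ≠ Φ q₂ := by
    intro h
    have hq : q₁ = q₂ := hΦ.injective h
    have : dist s t = 0 := by rw [← hγ.dist_eq, hs, ht, hq, dist_self]
    exact hst (by rwa [dist_eq_zero] at this)
  have key : dist (Φ q₁) (Φ q₂) < dist (Φ p₁) (Φ p₂) := by
    apply saccheri_axis (Φ p₁) (Φ q₁) (Φ q₂) (Φ p₂) hre1 hre2 hqq
    · intro v
      obtain ⟨u, hu⟩ := hsur v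
      rw [← hu]
      show dist (Φ p₁) (Φ q₁) ≤ dist (Φ p₁) (Φ (γ u))
      rw [hΦ.dist_eq, hΦ.dist_eq]
      exact hfoot₁ u
    · intro v
      obtain ⟨u, hu⟩ := hsur v
      rw [← hu]
      show dist (Φ p₂) (Φ q₂) ≤ dist (Φ p₂) (Φ (γ u))
      rw [hΦ.dist_eq, hΦ.dist_eq]
      exact hfoot₂ u
    · rwa [hΦ.dist_eq, hΦ.dist_eq]
    · rwa [hΦ.dist_eq]
  rwa [hΦ.dist_eq, hΦ.dist_eq] at key
end

section
/- Let X be a compact metric space with at least 3 points, f : X → X minimal, and A : X → S continuous with tr A ≡ 0, where S is the set of Schrödinger matrices [[t,−1],[1,0]]. Given an open V ⊂ X with closure disjoint from f(V̄) and f²(V̄), and Ã ∈ C⁰(X,S) with tr Ã supported in V ∪ f²(V) and tr Ã(z) + tr Ã(f²(z)) = 0 for z ∈ V, define B(x) = Id for x ∉ f(V)∪f²(V), B(x) = Ã(f⁻¹(x)) R_{−π/2} for x ∈ f(V), and B(x) = R_{−π/2} Ã(f⁻²(x)) for x ∈ f²(V). Then B(f(x)) A(x) B(x)⁻¹ = Ã(x)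 for all x ∈ X. -/
/-- The rotation matrix by angle `θ`. -/
noncomputable def rotMat (θ : ℝ) : Matrix (Fin 2) (Fin 2) ℝ :=
  !![Real.cos θ, -Real.sin θ; Real.sin θ, Real.cos θ]

/-- Membership in the set `S` of Schrödinger matrices `[[t,−1],[1,0]]`. -/
def IsSchrodingerMat (M : Matrix (Fin 2) (Fin 2) ℝ) : Prop :=
  ∃ t : ℝ, M = !![t, -1; 1, 0]


open Real in
lemma rot_neg_half' : rotMat (-(π/2)) = !![0,1;-1,0] := by
  simp [rotMat]

lemma schro_eq' {M : Matrix (Fin 2) (Fin 2) ℝ} (h : IsSchrodingerMat M) :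
    M = !![M.trace, -1; 1, 0] := by
  obtain ⟨t, rfl⟩ := h
  simp [Matrix.trace_fin_two]

lemma inv_explicit' (a b c d : ℝ) (h : a*d - b*c = 1) :
    (!![a,b;c,d] : Matrix (Fin 2) (Fin 2) ℝ)⁻¹ = !![d,-b;-c,a] := by
  apply Matrix.inv_eq_right_inv
  ext i j
  fin_cases i <;> fin_cases j <;>
    simp [Matrix.mul_apply, Fin.sum_univ_two] <;> linarith

open Real in
/-- Projection step for vanishing trace: if `A : X → S` has identically zero trace
(`X` compact with ≥ 3 points, `f` minimal), `V` is open with closure disjoint from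
its first two iterates, and `Ã : X → S` is continuous with `tr Ã` supported in
`V ∪ f²(V)` and `tr Ã(z) + tr Ã(f²z) = 0` on `V`, then the map `B` defined by
`B = Id` off `f(V) ∪ f²(V)`, `B(x) = Ã(f⁻¹x) R_{−π/2}` on `f(V)`, and
`B(x) = R_{−π/2} Ã(f⁻²x)` on `f²(V)` conjugates `(f,A)` to `(f,Ã)`. -/
theorem trace_zero_conjugation
    {X : Type*} [MetricSpace X] [CompactSpace X]
    (hcard : ∃ x y z : X, x ≠ y ∧ y ≠ z ∧ x ≠ z)
    (f : X ≃ₜ X) (hmin : ∀ x : X, Dense (Set.range fun n : ℤ => if 0 ≤ n then (⇑f)^[n.toNat] x else (⇑f.symm)^[(-n).toNat] x))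
    (A : X → Matrix (Fin 2) (Fin 2) ℝ)
    (hAS : ∀ x, IsSchrodingerMat (A x)) (hAcont : Continuous A)
    (hAtr : ∀ x, (A x).trace = 0)
    (V : Set X) (hV : IsOpen V)
    (hV1 : closure V ∩ (f '' closure V) = ∅)
    (hV2 : closure V ∩ ((f ∘ f) '' closure V) = ∅)
    (Atil : X → Matrix (Fin 2) (Fin 2) ℝ)
    (hAtilS : ∀ x, IsSchrodingerMat (Atil x)) (hAtilcont : Continuous Atil)
    (hsupp : ∀ x, x ∉ V ∪ ((f ∘ f) '' V) → (Atil x).trace = 0)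
    (hcancel : ∀ z ∈ V, (Atil z).trace + (Atil (f (f z))).trace = 0)
    (B : X → Matrix (Fin 2) (Fin 2) ℝ)
    (hB0 : ∀ x, x ∉ (f '' V) ∪ ((f ∘ f) '' V) → B x = 1)
    (hB1 : ∀ x ∈ f '' V, B x = Atil (f.symm x) * rotMat (-(π / 2)))
    (hB2 : ∀ x ∈ (f ∘ f) '' V, B x = rotMat (-(π / 2)) * Atil (f.symm (f.symm x))) :
    ∀ x : X, B (f x) * A x * (B x)⁻¹ = Atil x := by
  have hinj : Function.Injective f := f.injective
  have hd1 : V ∩ (f '' V) = ∅ := by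
    apply Set.eq_empty_of_subset_empty
    rw [← hV1]
    exact Set.inter_subset_inter subset_closure (Set.image_mono subset_closure)
  have hd2 : V ∩ ((f ∘ f) '' V) = ∅ := by
    apply Set.eq_empty_of_subset_empty
    rw [← hV2]
    exact Set.inter_subset_inter subset_closure (Set.image_mono subset_closure)
  have nd1 : ∀ z ∈ V, ∀ w ∈ V, f w ≠ z := by
    intro z hz w hw h
    exact Set.eq_empty_iff_forall_notMem.mp hd1 z ⟨hz, ⟨w, hw, h⟩⟩
  have nd2 : ∀ z ∈ V, ∀ w ∈ V, f (f w) ≠ z := by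
    intro z hz w hw h
    exact Set.eq_empty_iff_forall_notMem.mp hd2 z ⟨hz, ⟨w, hw, h⟩⟩
  have hA : ∀ x, A x = !![0,-1;1,0] := by
    intro x
    have h := schro_eq' (hAS x)
    rwa [hAtr x] at h
  have hAtil0 : ∀ x, x ∉ V ∪ ((f ∘ f) '' V) → Atil x = !![0,-1;1,0] := by
    intro x hx
    have h := schro_eq' (hAtilS x)
    rwa [hsupp x hx] at h
  intro x
  by_cases hx1 : x ∈ f '' V
  · -- x ∈ f(V)
    obtain ⟨z, hz, rfl⟩ := hx1
    have hxnV : f z ∉ V := fun h => nd1 _ h z hz rfl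
    have hxn2 : f z ∉ (f ∘ f) '' V := by
      rintro ⟨w, hw, hww⟩
      exact nd1 z hz w hw (hinj hww)
    have hBx : B (f z) = Atil z * rotMat (-(π/2)) := by
      rw [hB1 (f z) ⟨z, hz, rfl⟩, f.symm_apply_apply]
    have hBfx : B (f (f z)) = rotMat (-(π/2)) * Atil z := by
      rw [hB2 (f (f z)) ⟨z, hz, rfl⟩, f.symm_apply_apply, f.symm_apply_apply]
    rw [hBx, hBfx, hA, hAtil0 (f z) (by rintro (h|h); exacts [hxnV h, hxn2 h]),
      schro_eq' (hAtilS z), rot_neg_half']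
    set t := (Atil z).trace
    have h1 : (!![t,-1;1,0] : Matrix (Fin 2) (Fin 2) ℝ) * !![0,1;-1,0] = !![1,t;0,1] := by
      simp [Matrix.mul_fin_two]
    rw [h1, inv_explicit' 1 t 0 1 (by ring)]
    ext i j
    fin_cases i <;> fin_cases j <;>
      simp [Matrix.mul_apply, Fin.sum_univ_two] <;> ring
  · by_cases hx2 : x ∈ (f ∘ f) '' V
    · -- x ∈ f²(V)
      obtain ⟨z, hz, rfl⟩ := hx2
      simp only [Function.comp_apply] at *
      have hBx : B (f (f z)) = rotMat (-(π/2)) * Atil z := by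
        rw [hB2 (f (f z)) ⟨z, hz, rfl⟩, f.symm_apply_apply, f.symm_apply_apply]
      have hBfx : B (f (f (f z))) = 1 := by
        apply hB0
        rintro (⟨w, hw, hww⟩ | ⟨w, hw, hww⟩)
        · exact nd2 w hw z hz (hinj hww).symm
        · exact nd1 w hw z hz (hinj (hinj hww)).symm
      have htr : (Atil (f (f z))).trace = -(Atil z).trace := by
        have := hcancel z hz; linarith
      rw [hBx, hBfx, hA, schro_eq' (hAtilS (f (f z))), htr,
        schro_eq' (hAtilS z), rot_neg_half']
      set t := (Atil z).trace
      have h1 : (!![(0:ℝ),1;-1,0] : Matrix (Fin 2) (Fin 2) ℝ) * !![t,-1;1,0] = !![1,0;-t,1] := by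
        simp [Matrix.mul_fin_two]
      rw [h1, inv_explicit' 1 0 (-t) 1 (by ring)]
      ext i j
      fin_cases i <;> fin_cases j <;>
        simp [Matrix.mul_apply, Fin.sum_univ_two] <;> ring
    · by_cases hxV : x ∈ V
      · -- x ∈ V
        have hBx : B x = 1 := hB0 x (by rintro (h|h); exacts [hx1 h, hx2 h])
        have hBfx : B (f x) = Atil x * rotMat (-(π/2)) := by
          rw [hB1 (f x) ⟨x, hxV, rfl⟩, f.symm_apply_apply]
        rw [hBx, hBfx, hA, rot_neg_half', inv_one, mul_one, mul_assoc]
        have h1 : (!![(0:ℝ),1;-1,0] : Matrix (Fin 2) (Fin 2) ℝ) * !![0,-1;1,0] = 1 := by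
          ext i j
          fin_cases i <;> fin_cases j <;>
            simp [Matrix.mul_apply, Fin.sum_univ_two]
        rw [h1, mul_one]
      · -- x ∉ V ∪ f(V) ∪ f²(V)
        have hBx : B x = 1 := hB0 x (by rintro (h|h); exacts [hx1 h, hx2 h])
        have hBfx : B (f x) = 1 := by
          apply hB0
          rintro (⟨w, hw, hww⟩ | ⟨w, hw, hww⟩)
          · exact hxV (by rwa [← hinj hww])
          · exact hx1 ⟨w, hw, hinj hww⟩
        rw [hBx, hBfx, hA, hAtil0 x (by rintro (h|h); exacts [hxV h, hx2 h]), inv_one, mul_one, one_mul]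
end

section
/- The map (B₁,B₂,B₃) ↦ B₃B₂B₁ is a bijection (indeed a homeomorphism/analytic diffeomorphism) from the set Z of triples (B₁,B₂,B₃) ∈ S³ with tr B₂ ≠ 0 onto the set L of matrices [[a,b],[c,d]] ∈ SL(2,ℝ) with d ≠ 0. -/
/-- The Schrödinger matrix `[[t,−1],[1,0]]`. -/
def schrodingerMat (t : ℝ) : Matrix (Fin 2) (Fin 2) ℝ := !![t, -1; 1, 0]

lemma schrod_prod (t₁ t₂ t₃ : ℝ) :
    schrodingerMat t₃ * schrodingerMat t₂ * schrodingerMat t₁ =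
      !![t₃*(t₂*t₁-1)-t₁, 1-t₃*t₂; t₂*t₁-1, -t₂] := by
  simp [schrodingerMat, Matrix.mul_fin_two]
  ring_nf
  simp

/-- The map `(B₁,B₂,B₃) ↦ B₃B₂B₁` is a bijection from the set of triples of
Schrödinger matrices with `tr B₂ ≠ 0` (parametrized by `(t₁,t₂,t₃)` with `t₂ ≠ 0`)
onto the set `L` of matrices in `SL(2,ℝ)` whose lower-right entry is nonzero. -/
theorem schrodinger_triple_product_bijective :
    Set.BijOn (fun p : ℝ × ℝ × ℝ =>
        schrodingerMat p.2.2 * schrodingerMat p.2.1 * schrodingerMat p.1)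
      {p : ℝ × ℝ × ℝ | p.2.1 ≠ 0}
      {M : Matrix (Fin 2) (Fin 2) ℝ | M.det = 1 ∧ M 1 1 ≠ 0} := by
  refine ⟨?_, ?_, ?_⟩
  · rintro ⟨t₁, t₂, t₃⟩ ht
    simp only [Set.mem_setOf_eq] at ht ⊢
    rw [schrod_prod]
    refine ⟨?_, ?_⟩
    · simp [Matrix.det_fin_two]; ring
    · simpa using ht
  · rintro ⟨t₁, t₂, t₃⟩ ht ⟨s₁, s₂, s₃⟩ hs h
    simp only [Set.mem_setOf_eq] at ht hs
    simp only [schrod_prod] at h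
    have h10 := congrFun (congrFun h 1) 0
    have h11 := congrFun (congrFun h 1) 1
    have h01 := congrFun (congrFun h 0) 1
    simp [Matrix.cons_val_zero, Matrix.cons_val_one] at h10 h11 h01
    have e2 : t₂ = s₂ := by linarith
    subst e2
    have e1 : t₁ = s₁ := by
      have := mul_left_cancel₀ ht (by linarith : t₂ * t₁ = t₂ * s₁)
      exact this
    have e3 : t₃ = s₃ := by
      have : t₃ * t₂ = s₃ * t₂ := by linarith
      exact mul_right_cancel₀ ht this
    simp [e1, e3]
  · rintro M ⟨hdet, hd⟩
    refine ⟨(-(M 1 0 + 1) / M 1 1, -(M 1 1), (M 0 1 - 1) / M 1 1), by simpa using hd, ?_⟩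
    simp only [schrod_prod]
    have hdet' : M 0 0 * M 1 1 - M 0 1 * M 1 0 = 1 := by
      rw [Matrix.det_fin_two] at hdet; linarith
    ext i j
    fin_cases i <;> fin_cases j <;>
      simp only [Fin.zero_eta, Fin.mk_one, Matrix.of_apply, Matrix.cons_val', Matrix.cons_val_zero, Matrix.cons_val_one, Matrix.head_cons,
        Matrix.head_fin_const, Matrix.empty_val', Matrix.cons_val_fin_one] <;>
      field_simp <;> nlinarith [hdet', hd]
end

section
/- Let f : 𝕋² → 𝕋² be given by f(x,y) = (x+α, y+2x) with α irrational, and A(x,y) = R_{2πx}. Then for every continuous B : 𝕋² → SL(2,ℝ), the map C(x,y) = B(f(x,y)) A(x,y) B(x,y)⁻¹ is not homotopic to a constant map 𝕋² → SL(2,ℝ). -/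
open Real

open Set

noncomputable section

def clamp (x : ℝ) : ℝ := max 0 (min x 1)

lemma clamp_zero : clamp 0 = 0 := by simp [clamp]
lemma clamp_one : clamp 1 = 1 := by norm_num [clamp]
lemma clamp_nonneg (x : ℝ) : 0 ≤ clamp x := le_max_left _ _
lemma clamp_le_one (x : ℝ) : clamp x ≤ 1 := by
  simp only [clamp, max_le_iff]; constructor <;> [norm_num; exact min_le_right _ _]
lemma clamp_mem (x : ℝ) : clamp x ∈ Icc (0:ℝ) 1 := ⟨clamp_nonneg x, clamp_le_one x⟩
lemma continuous_clamp : Continuous clamp :=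
  continuous_const.max (continuous_id.min continuous_const)
lemma clamp_of_mem {x : ℝ} (h : x ∈ Icc (0:ℝ) 1) : clamp x = x := by
  simp only [clamp]; rw [min_eq_left h.2, max_eq_right h.1]
lemma clamp_clamp (x : ℝ) : clamp (clamp x) = clamp x := clamp_of_mem (clamp_mem x)

lemma int_valued_const {g : ℝ → ℝ} (hg : Continuous g) (hi : ∀ x, ∃ n : ℤ, g x = n)
    (a b : ℝ) : g a = g b := by
  have key : ∀ s t : ℝ, g s < g t → False := by
    intro s t hst
    obtain ⟨ns, hns⟩ := hi s
    obtain ⟨nt, hnt⟩ := hi t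
    have hlt : ns < nt := by
      have : (ns:ℝ) < nt := by rw [← hns, ← hnt]; exact hst
      exact_mod_cast this
    have hmem : (ns:ℝ) + 1/2 ∈ Set.uIcc (g s) (g t) := by
      rw [Set.uIcc_of_le hst.le]
      constructor
      · rw [hns]; linarith
      · rw [hnt]
        have : (ns:ℝ) + 1 ≤ nt := by exact_mod_cast hlt
        linarith
    obtain ⟨x, _, hx⟩ := intermediate_value_uIcc (a := s) (b := t) (f := g)
      hg.continuousOn hmem
    obtain ⟨n, hn⟩ := hi x
    rw [hn] at hx
    have : (2*n : ℝ) = 2 * ns + 1 := by push_cast; linarith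
    have : (2*n : ℤ) = 2 * ns + 1 := by exact_mod_cast this
    omega
  rcases lt_trichotomy (g a) (g b) with h | h | h
  · exact absurd (key a b h) (by simp)
  · exact h
  · exact absurd (key b a h) (by simp)

lemma exp_one_const {d : ℝ → ℂ} (hd : Continuous d)
    (h1 : ∀ t, Complex.exp (d t) = 1) (a b : ℝ) : d a = d b := by
  have key : ∀ t, ∃ n : ℤ, d t = n * (2 * Real.pi * Complex.I) := fun t =>
    Complex.exp_eq_one_iff.mp (h1 t)
  have hgc : Continuous fun t => (d t).im / (2 * Real.pi) :=
    (Complex.continuous_im.comp hd).div_const _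
  have hgi : ∀ t, ∃ n : ℤ, (d t).im / (2 * Real.pi) = n := by
    intro t
    obtain ⟨n, hn⟩ := key t
    refine ⟨n, ?_⟩
    have him : (d t).im = n * (2 * Real.pi) := by
      rw [hn]; simp [Complex.mul_im]
    rw [him]
    have : (2 * Real.pi) ≠ 0 := by positivity
    field_simp
  have hre : ∀ t, (d t).re = 0 := by
    intro t
    obtain ⟨n, hn⟩ := key t
    rw [hn]; simp [Complex.mul_re]
  have hgab := int_valued_const hgc hgi a b
  have h2π : (2 * Real.pi) ≠ 0 := by positivity
  apply Complex.ext
  · rw [hre a, hre b]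
  · field_simp at hgab; exact hgab

lemma prod_telescope (f : ℕ → ℂ) (hf : ∀ j, f j ≠ 0) (n : ℕ) :
    (∏ j ∈ Finset.range n, f (j+1) / f j) = f n / f 0 := by
  induction n with
  | zero => simp [div_self (hf 0)]
  | succ n ih =>
      rw [Finset.prod_range_succ, ih]
      field_simp
      rw [div_eq_div_iff (mul_ne_zero (hf n) (hf 0)) (hf 0)]
      ring

lemma lift_step {X : Type*} [TopologicalSpace X]
    (v : ℝ → X → ℂ) (hv : Continuous fun q : ℝ × X => v q.1 q.2)
    (h0 : ∀ t x, v t x ≠ 0)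
    (hcl : ∀ t x, v t x = v (max 0 (min t 1)) x)
    (u₀ : X → ℂ) (hu₀c : Continuous u₀) (hu₀ : ∀ x, Complex.exp (u₀ x) = v 0 x)
    (N : ℕ) (hN : 0 < N)
    (hsmall : ∀ (x : X) (a b : ℝ), a ∈ Icc (0:ℝ) 1 → b ∈ Icc (0:ℝ) 1 → |a - b| ≤ 1/N →
      ‖v a x - v b x‖ < ‖v b x‖) :
    ∃ u : ℝ → X → ℂ, Continuous (fun q : ℝ × X => u q.1 q.2) ∧
      (∀ t x, Complex.exp (u t x) = v t x) ∧ (∀ x, u 0 x = u₀ x) := by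
  have hNR : (0:ℝ) < N := by exact_mod_cast hN
  set cl : ℝ → ℝ := fun t => max 0 (min t 1) with hcldef
  have hclc : Continuous cl := continuous_const.max (continuous_id.min continuous_const)
  have hclmem : ∀ t, cl t ∈ Icc (0:ℝ) 1 := by
    intro t
    refine ⟨le_max_left _ _, ?_⟩
    simp only [hcldef, max_le_iff]
    exact ⟨by norm_num, min_le_right _ _⟩
  have hcl0 : cl 0 = 0 := by simp [hcldef]
  set a : ℝ → ℕ → ℝ := fun t j => min (cl t) ((j : ℝ) / N) with hadef
  have hamem : ∀ t j, a t j ∈ Icc (0:ℝ) 1 := fun t j =>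
    ⟨le_min (hclmem t).1 (by positivity), le_trans (min_le_left _ _) (hclmem t).2⟩
  have hcast : ∀ j : ℕ, ((j+1 : ℕ) : ℝ) / N = (j:ℝ)/N + 1/N := by
    intro j; push_cast; ring
  have hadj : ∀ t j, |a t (j+1) - a t j| ≤ 1/N := by
    intro t j
    have h1N : (0:ℝ) < 1/N := by positivity
    have hmono : a t j ≤ a t (j+1) := by
      apply min_le_min le_rfl
      rw [hcast]; linarith
    have hupper : a t (j+1) ≤ a t j + 1/N := by
      rcases le_total (cl t) ((j:ℝ)/N) with h | h
      · have h2 : cl t ≤ ((j+1:ℕ):ℝ)/N := by rw [hcast]; linarith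
        simp only [hadef, min_eq_left h, min_eq_left h2]
        linarith
      · have h2 : a t j = (j:ℝ)/N := min_eq_right h
        calc a t (j+1) ≤ ((j+1:ℕ):ℝ)/N := min_le_right _ _
          _ = a t j + 1/N := by rw [hcast, h2]
    rw [abs_le]; constructor <;> linarith
  -- the ratios
  set r : ℝ → X → ℕ → ℂ := fun t x j => v (a t (j+1)) x / v (a t j) x with hrdef
  have hrnorm : ∀ t x j, ‖r t x j - 1‖ < 1 := by
    intro t x j
    have hb := h0 (a t j) x
    have hs := hsmall x (a t (j+1)) (a t j) (hamem t (j+1)) (hamem t j) (hadj t j)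
    have hkey : r t x j - 1 = (v (a t (j+1)) x - v (a t j) x) / v (a t j) x := by
      rw [hrdef]; field_simp
    rw [hkey, norm_div, div_lt_one (norm_pos_iff.mpr hb)]
    exact hs
  have hrne : ∀ t x j, r t x j ≠ 0 := fun t x j => div_ne_zero (h0 _ _) (h0 _ _)
  have hrslit : ∀ t x j, r t x j ∈ Complex.slitPlane := by
    intro t x j
    rw [Complex.mem_slitPlane_iff]
    left
    have h1 : |(r t x j - 1).re| ≤ ‖r t x j - 1‖ := Complex.abs_re_le_norm _
    have h2 := hrnorm t x j
    have : (r t x j - 1).re = (r t x j).re - 1 := by simp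
    rw [this] at h1
    cases abs_le.mp h1 with
    | intro hl hr => linarith
  -- the lift
  refine ⟨fun t x => u₀ x + ∑ j ∈ Finset.range N, Complex.log (r t x j), ?_, ?_, ?_⟩
  · apply Continuous.add (hu₀c.comp continuous_snd)
    apply continuous_finset_sum
    intro j _
    apply Continuous.clog
    · apply Continuous.div
      · exact hv.comp ((((hclc.comp continuous_fst).min continuous_const)).prodMk
          continuous_snd)
      · exact hv.comp ((((hclc.comp continuous_fst).min continuous_const)).prodMk
          continuous_snd)
      · exact fun q => h0 _ _
    · exact fun q => hrslit _ _ _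
  · intro t x
    rw [Complex.exp_add, Complex.exp_sum, hu₀ x]
    have hexplog : ∀ j ∈ Finset.range N, Complex.exp (Complex.log (r t x j)) = r t x j :=
      fun j _ => Complex.exp_log (hrne t x j)
    rw [Finset.prod_congr rfl hexplog]
    have htel := prod_telescope (fun j => v (a t j) x) (fun j => h0 _ _) N
    rw [htel]
    have hfN : a t N = cl t := by
      have : ((N:ℕ):ℝ)/N = 1 := by field_simp
      simp only [hadef, this]
      exact min_eq_left (hclmem t).2
    have hf0 : a t 0 = 0 := by
      simp only [hadef, Nat.cast_zero, zero_div]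
      exact min_eq_right (hclmem t).1
    rw [hfN, hf0, ← hcl t x]
    field_simp [h0 0 x]
  · intro x
    have : ∀ j ∈ Finset.range N, Complex.log (r 0 x j) = 0 := by
      intro j _
      have ha0 : ∀ i : ℕ, a 0 i = 0 := by
        intro i
        simp only [hadef, hcl0]
        exact min_eq_left (by positivity)
      simp only [hrdef, ha0, div_self (h0 0 x), Complex.log_one]
    simp only
    rw [Finset.sum_congr rfl this]
    simp

lemma exists_N {X : Type*} [MetricSpace X] {K : Set X} (hK : IsCompact K)
    (hKne : K.Nonempty)
    (w : ℝ → X → ℂ) (hw : Continuous fun q : ℝ × X => w q.1 q.2)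
    (h0 : ∀ t x, w t x ≠ 0) :
    ∃ N : ℕ, 0 < N ∧ ∀ x ∈ K, ∀ a b : ℝ, a ∈ Icc (0:ℝ) 1 → b ∈ Icc (0:ℝ) 1 →
      |a - b| ≤ 1/N → ‖w a x - w b x‖ < ‖w b x‖ := by
  set S : Set (ℝ × X) := Icc (0:ℝ) 1 ×ˢ K with hSdef
  have hScomp : IsCompact S := isCompact_Icc.prod hK
  have hSne : S.Nonempty := (nonempty_Icc.mpr zero_le_one).prod hKne
  obtain ⟨q₀, hq₀S, hq₀min⟩ := hScomp.exists_isMinOn hSne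
    ((hw.norm).continuousOn)
  set m : ℝ := ‖w q₀.1 q₀.2‖ with hmdef
  have hm : 0 < m := norm_pos_iff.mpr (h0 _ _)
  have hUC := hScomp.uniformContinuousOn_of_continuous hw.continuousOn
  rw [Metric.uniformContinuousOn_iff] at hUC
  obtain ⟨δ, hδ, hδ'⟩ := hUC m hm
  obtain ⟨N, hNδ⟩ := exists_nat_gt (1/δ)
  refine ⟨N + 1, Nat.succ_pos N, ?_⟩
  intro x hx a b ha hb hab
  have hNR : (0:ℝ) < N + 1 := by positivity
  have h1N : 1/((N+1:ℕ):ℝ) < δ := by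
    push_cast
    rw [div_lt_iff₀ hNR]
    rw [div_lt_iff₀ hδ] at hNδ
    nlinarith
  have habδ : |a - b| < δ := lt_of_le_of_lt hab h1N
  have hdist : dist ((a, x) : ℝ × X) ((b, x) : ℝ × X) < δ := by
    rw [Prod.dist_eq, dist_self, Real.dist_eq]
    rw [max_eq_left (abs_nonneg _)]
    exact habδ
  have hlt := hδ' (a, x) ⟨ha, hx⟩ (b, x) ⟨hb, hx⟩ hdist
  rw [dist_eq_norm] at hlt
  have hmle : m ≤ ‖w b x‖ := isMinOn_iff.mp hq₀min (b, x) ⟨hb, hx⟩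
  calc ‖w a x - w b x‖ < m := hlt
  _ ≤ ‖w b x‖ := hmle

lemma max_min_eq_clamp (t : ℝ) : max 0 (min t 1) = clamp t := rfl

lemma lift1 (v : ℝ → ℂ) (hv : Continuous v) (h0 : ∀ x, v x ≠ 0) :
    ∃ u : ℝ → ℂ, Continuous u ∧ ∀ x, Complex.exp (u x) = v (clamp x) := by
  have hw₀ : ∃ w, Complex.exp w = v 0 := by
    have : v 0 ∈ Set.range Complex.exp := by rw [Complex.range_exp]; exact h0 0
    exact this
  obtain ⟨w₀, hw₀⟩ := hw₀
  set v' : ℝ → ℝ → ℂ := fun t _ => v (clamp t) with hv'def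
  have hv'c : Continuous fun q : ℝ × ℝ => v' q.1 q.2 :=
    hv.comp (continuous_clamp.comp continuous_fst)
  have h0' : ∀ t x, v' t x ≠ 0 := fun t x => h0 _
  have hcl' : ∀ t x, v' t x = v' (max 0 (min t 1)) x := by
    intro t x
    simp only [hv'def, max_min_eq_clamp, clamp_clamp]
  obtain ⟨N, hN, hsm⟩ := exists_N (K := ({0} : Set ℝ)) isCompact_singleton
    (Set.singleton_nonempty 0) v' hv'c h0'
  obtain ⟨u, huc, hue, -⟩ := lift_step v' hv'c h0' hcl'
    (fun _ => w₀) continuous_const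
    (fun x => by simp only [hv'def, clamp_zero]; exact hw₀)
    N hN
    (fun x a b ha hb hab => by
      have := hsm 0 rfl a b ha hb hab
      simpa [hv'def] using this)
  exact ⟨fun t => u t 0, huc.comp (continuous_id.prodMk continuous_const),
    fun x => hue x 0⟩

lemma lift2 (v : ℝ × ℝ → ℂ) (hv : Continuous v) (h0 : ∀ p, v p ≠ 0) :
    ∃ u : ℝ × ℝ → ℂ, Continuous u ∧
      ∀ p : ℝ × ℝ, Complex.exp (u p) = v (clamp p.1, clamp p.2) := by
  set v' : ℝ → ℝ → ℂ := fun t x => v (clamp t, clamp x) with hv'def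
  have hv'c : Continuous fun q : ℝ × ℝ => v' q.1 q.2 :=
    hv.comp (((continuous_clamp.comp continuous_fst)).prodMk
      (continuous_clamp.comp continuous_snd))
  have h0' : ∀ t x, v' t x ≠ 0 := fun t x => h0 _
  have hcl' : ∀ t x, v' t x = v' (max 0 (min t 1)) x := by
    intro t x
    simp only [hv'def, max_min_eq_clamp, clamp_clamp]
  obtain ⟨u₀, hu₀c, hu₀⟩ := lift1 (fun x => v (0, x)) (hv.comp (Continuous.prodMk_right 0)) (fun x => h0 _)
  obtain ⟨N, hN, hsm⟩ := exists_N (K := Icc (0:ℝ) 1) isCompact_Icc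
    (nonempty_Icc.mpr zero_le_one) v' hv'c h0'
  obtain ⟨u, huc, hue, -⟩ := lift_step v' hv'c h0' hcl'
    u₀ hu₀c
    (fun x => by simp only [hv'def, clamp_zero]; exact hu₀ x)
    N hN
    (fun x a b ha hb hab => by
      have key := hsm (clamp x) (clamp_mem x) a b ha hb hab
      simpa only [hv'def, clamp_clamp] using key)
  exact ⟨fun p => u p.1 p.2, huc, fun p => hue p.1 p.2⟩

lemma lift3 (v : ℝ × (ℝ × ℝ) → ℂ) (hv : Continuous v) (h0 : ∀ q, v q ≠ 0) :
    ∃ u : ℝ × (ℝ × ℝ) → ℂ, Continuous u ∧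
      ∀ q : ℝ × (ℝ × ℝ), Complex.exp (u q) = v (clamp q.1, (clamp q.2.1, clamp q.2.2)) := by
  set v' : ℝ → ℝ × ℝ → ℂ := fun t x => v (clamp t, (clamp x.1, clamp x.2)) with hv'def
  have hv'c : Continuous fun q : ℝ × (ℝ × ℝ) => v' q.1 q.2 := by
    apply hv.comp
    refine Continuous.prodMk (continuous_clamp.comp continuous_fst) ?_
    exact Continuous.prodMk (continuous_clamp.comp (continuous_fst.comp continuous_snd))
      (continuous_clamp.comp (continuous_snd.comp continuous_snd))
  have h0' : ∀ t x, v' t x ≠ 0 := fun t x => h0 _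
  have hcl' : ∀ t x, v' t x = v' (max 0 (min t 1)) x := by
    intro t x
    simp only [hv'def, max_min_eq_clamp, clamp_clamp]
  obtain ⟨u₀, hu₀c, hu₀⟩ := lift2 (fun p => v (0, p)) (hv.comp (Continuous.prodMk_right 0))
    (fun p => h0 _)
  obtain ⟨N, hN, hsm⟩ := exists_N (K := (Icc (0:ℝ) 1) ×ˢ (Icc (0:ℝ) 1))
    (isCompact_Icc.prod isCompact_Icc)
    ((nonempty_Icc.mpr zero_le_one).prod (nonempty_Icc.mpr zero_le_one)) v' hv'c h0'
  obtain ⟨u, huc, hue, -⟩ := lift_step v' hv'c h0' hcl'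
    u₀ hu₀c
    (fun x => by simp only [hv'def, clamp_zero]; exact hu₀ x)
    N hN
    (fun x a b ha hb hab => by
      have key := hsm (clamp x.1, clamp x.2) ⟨clamp_mem x.1, clamp_mem x.2⟩ a b ha hb hab
      simpa only [hv'def, clamp_clamp] using key)
  exact ⟨fun q => u q.1 q.2, huc, fun q => hue q.1 q.2⟩

open Classical in
/-- winding displacement of `v` over `[0,1]` (times `2πi`). -/
def wnd (v : ℝ → ℂ) : ℂ :=
  if h : Continuous v ∧ ∀ x, v x ≠ 0 then
    Classical.choose (lift1 v h.1 h.2) 1 - Classical.choose (lift1 v h.1 h.2) 0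
  else 0

lemma wnd_eq {v : ℝ → ℂ} (hv : Continuous v) (h0 : ∀ x, v x ≠ 0)
    {u : ℝ → ℂ} (hu : Continuous u) (hl : ∀ x, Complex.exp (u x) = v (clamp x)) :
    wnd v = u 1 - u 0 := by
  rw [wnd, dif_pos (⟨hv, h0⟩ : Continuous v ∧ ∀ x, v x ≠ 0)]
  obtain ⟨hUc, hU⟩ := Classical.choose_spec (lift1 v hv h0)
  set U := Classical.choose (lift1 v hv h0)
  have hd : ∀ t, Complex.exp (U t - u t) = 1 := by
    intro t
    rw [Complex.exp_sub, hU t, hl t, div_self (h0 _)]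
  have := exp_one_const (hUc.sub hu) hd 1 0
  linear_combination (by simpa only [Pi.sub_apply] using this : U 1 - u 1 = U 0 - u 0)

lemma wnd_loop_int {v : ℝ → ℂ} (hv : Continuous v) (h0 : ∀ x, v x ≠ 0)
    (hloop : v 1 = v 0) : ∃ n : ℤ, wnd v = n * (2 * Real.pi * Complex.I) := by
  obtain ⟨U, hUc, hU⟩ := lift1 v hv h0
  rw [wnd_eq hv h0 hUc hU]
  rw [← Complex.exp_eq_one_iff]
  rw [Complex.exp_sub, hU, hU, clamp_one, clamp_zero, hloop, div_self (h0 0)]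

abbrev Mat2 := Matrix (Fin 2) (Fin 2) ℝ

/-- first column of `M` as a complex number -/
def zC (M : Mat2) : ℂ := (M 0 0 : ℝ) + (M 1 0 : ℝ) * Complex.I

/-- `M` acting on `ℂ = ℝ²` as a real-linear map -/
def actC (M : Mat2) (w : ℂ) : ℂ :=
  ((M 0 0 * w.re + M 0 1 * w.im : ℝ) : ℂ) +
    ((M 1 0 * w.re + M 1 1 * w.im : ℝ) : ℂ) * Complex.I

lemma zC_re (M : Mat2) : (zC M).re = M 0 0 := by simp [zC]
lemma zC_im (M : Mat2) : (zC M).im = M 1 0 := by simp [zC]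

lemma zC_ne_zero {M : Mat2} (h : M.det = 1) : zC M ≠ 0 := by
  intro h0
  rw [Complex.ext_iff] at h0
  obtain ⟨h1, h2⟩ := h0
  rw [zC_re] at h1
  rw [zC_im] at h2
  simp only [Complex.zero_re, Complex.zero_im] at h1 h2
  rw [Matrix.det_fin_two, h1, h2] at h
  simp at h

lemma actC_zC (M N : Mat2) : actC M (zC N) = zC (M * N) := by
  simp only [actC, zC, Complex.ext_iff, Matrix.mul_apply, Fin.sum_univ_two]
  constructor <;> simp

lemma actC_one_right (M : Mat2) : actC M 1 = zC M := by
  simp [actC, zC]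

lemma actC_id (w : ℂ) : actC 1 w = w := by
  simp only [actC, Matrix.one_apply]
  norm_num

lemma actC_ne_zero {M : Mat2} (h : M.det = 1) {w : ℂ} (hw : w ≠ 0) : actC M w ≠ 0 := by
  intro h0
  rw [Complex.ext_iff] at h0
  obtain ⟨h1, h2⟩ := h0
  simp only [actC, Complex.add_re, Complex.ofReal_re, Complex.mul_re, Complex.I_re,
    Complex.I_im, Complex.ofReal_im, Complex.add_im, Complex.mul_im, Complex.zero_re,
    Complex.zero_im] at h1 h2
  ring_nf at h1 h2
  rw [Matrix.det_fin_two] at h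
  apply hw
  rw [Complex.ext_iff]
  constructor
  · show w.re = 0
    linear_combination M 1 1 * h1 - M 0 1 * h2 - w.re * h
  · show w.im = 0
    linear_combination (- M 1 0) * h1 + M 0 0 * h2 - w.im * h

lemma actC_rot (θ : ℝ) (w : ℂ) : actC (rotMat θ) w = Complex.exp (θ * Complex.I) * w := by
  rw [Complex.exp_mul_I]
  simp only [actC, rotMat]
  rw [Complex.ext_iff]
  push_cast
  constructor <;> simp <;> ring

lemma continuous_actC {Y : Type*} [TopologicalSpace Y] {f : Y → Mat2} {g : Y → ℂ}
    (hf : Continuous f) (hg : Continuous g) : Continuous fun y => actC (f y) (g y) := by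
  apply Continuous.add
  · apply Complex.continuous_ofReal.comp
    exact ((hf.matrix_elem 0 0).mul (Complex.continuous_re.comp hg)).add
      ((hf.matrix_elem 0 1).mul (Complex.continuous_im.comp hg))
  · apply Continuous.mul _ continuous_const
    apply Complex.continuous_ofReal.comp
    exact ((hf.matrix_elem 1 0).mul (Complex.continuous_re.comp hg)).add
      ((hf.matrix_elem 1 1).mul (Complex.continuous_im.comp hg))

lemma continuous_zC {Y : Type*} [TopologicalSpace Y] {f : Y → Mat2}
    (hf : Continuous f) : Continuous fun y => zC (f y) := by
  apply Continuous.add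
  · exact Complex.continuous_ofReal.comp (hf.matrix_elem 0 0)
  · exact (Complex.continuous_ofReal.comp (hf.matrix_elem 1 0)).mul continuous_const

lemma continuous_rotMat {Y : Type*} [TopologicalSpace Y] {f : Y → ℝ} (hf : Continuous f) :
    Continuous fun y => rotMat (f y) := by
  apply continuous_matrix
  intro i j
  fin_cases i <;> fin_cases j <;> simp [rotMat] <;> fun_prop

lemma det_rotMat (θ : ℝ) : (rotMat θ).det = 1 := by
  rw [rotMat, Matrix.det_fin_two_of]
  nlinarith [Real.sin_sq_add_cos_sq θ]

lemma rotMat_zero : rotMat 0 = 1 := by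
  rw [rotMat, Matrix.one_fin_two]
  norm_num

lemma rotMat_two_pi : rotMat (2 * Real.pi) = 1 := by
  rw [rotMat, Matrix.one_fin_two, Real.cos_two_pi, Real.sin_two_pi]
  norm_num

lemma inv_eq_adj {M : Mat2} (h : M.det = 1) : M⁻¹ = M.adjugate := by
  rw [Matrix.inv_def, h]; simp

lemma det_inv_one {M : Mat2} (h : M.det = 1) : (M⁻¹).det = 1 := by
  rw [Matrix.det_nonsing_inv, h]; simp

lemma mul_inv_one {M : Mat2} (h : M.det = 1) : M * M⁻¹ = 1 :=
  Matrix.mul_nonsing_inv M (by rw [h]; exact isUnit_one)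

/-- explicit continuous path from any `SL(2,ℝ)` matrix to the identity -/
lemma exists_sl2_path (M : Mat2) (hdet : M.det = 1) :
    ∃ p : ℝ → Mat2, Continuous p ∧ p 0 = M ∧ p 1 = 1 ∧ ∀ t, (p t).det = 1 := by
  set a := M 0 0 with ha
  set b := M 0 1 with hb
  set c := M 1 0 with hc
  set d := M 1 1 with hd
  have hdet' : a * d - b * c = 1 := by rw [ha, hb, hc, hd, ← Matrix.det_fin_two]; exact hdet
  have hz : zC M ≠ 0 := zC_ne_zero hdet
  set r := ‖zC M‖ with hr
  have hrpos : 0 < r := by rw [hr]; exact (norm_pos_iff.mpr hz)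
  have hr2 : r ^ 2 = a ^ 2 + c ^ 2 := by
    rw [hr, Complex.sq_norm, Complex.normSq_apply, zC_re, zC_im, ha, hc]; ring
  set θ := Complex.arg (zC M) with hθ
  have hcos : Real.cos θ = a / r := by
    rw [hθ, Complex.cos_arg hz, zC_re, ha, hr]
  have hsin : Real.sin θ = c / r := by
    rw [hθ, Complex.sin_arg, zC_im, hc, hr]
  set s := (a * b + c * d) / r with hs
  set E : ℝ → ℝ := fun t => Real.exp ((1 - t) * Real.log r) with hE
  set E' : ℝ → ℝ := fun t => Real.exp ((t - 1) * Real.log r) with hE'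
  have hEE' : ∀ t, E t * E' t = 1 := by
    intro t
    rw [hE, hE', ← Real.exp_add]
    ring_nf
    exact Real.exp_zero
  have hE0 : E 0 = r := by rw [hE]; simp [Real.exp_log hrpos]
  have hE'0 : E' 0 = 1 / r := by
    have h1 := hEE' 0
    rw [hE0] at h1
    field_simp at h1 ⊢
    linarith
  have hE1 : E 1 = 1 := by rw [hE]; simp
  have hE'1 : E' 1 = 1 := by rw [hE']; simp
  refine ⟨fun t => rotMat ((1 - t) * θ) * !![E t, (1 - t) * s; 0, E' t], ?_, ?_, ?_, ?_⟩
  · apply Continuous.matrix_mul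
    · exact continuous_rotMat (by fun_prop)
    · apply continuous_matrix
      intro i j
      fin_cases i <;> fin_cases j <;> simp [hE, hE'] <;> fun_prop
  · -- p 0 = M
    show rotMat ((1 - 0) * θ) * !![E 0, (1 - 0) * s; 0, E' 0] = M
    have h10 : (1:ℝ) - 0 = 1 := by norm_num
    rw [h10, one_mul, one_mul, hE0, hE'0]
    have hrne : r ≠ 0 := ne_of_gt hrpos
    have hr2ne : r ^ 2 ≠ 0 := pow_ne_zero 2 hrne
    have key1 : a * (a * b + c * d) - c = b * r ^ 2 := by
      linear_combination c * hdet' - b * hr2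
    have key2 : c * (a * b + c * d) + a = d * r ^ 2 := by
      linear_combination (-a) * hdet' - d * hr2
    have g00 : a / r * r + -(c / r) * 0 = a := by field_simp; ring
    have g10 : c / r * r + a / r * 0 = c := by field_simp; ring
    have g01 : a / r * s + -(c / r) * (1 / r) = b := by
      rw [hs]
      have e1 : a / r * ((a * b + c * d) / r) + -(c / r) * (1 / r)
          = (a * (a * b + c * d) - c) / r ^ 2 := by ring
      rw [e1, key1]
      field_simp
    have g11 : c / r * s + a / r * (1 / r) = d := by
      rw [hs]
      have e2 : c / r * ((a * b + c * d) / r) + a / r * (1 / r)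
          = (c * (a * b + c * d) + a) / r ^ 2 := by ring
      rw [e2, key2]
      field_simp
    rw [rotMat, Matrix.mul_fin_two, hcos, hsin, g00, g01, g10, g11]
    exact (Matrix.eta_fin_two M).symm
  · show rotMat ((1 - 1) * θ) * !![E 1, (1 - 1) * s; 0, E' 1] = 1
    rw [show (1:ℝ) - 1 = 0 by ring, zero_mul, rotMat_zero, one_mul, hE1, hE'1,
      Matrix.one_fin_two]
    norm_num
  · intro t
    show (rotMat ((1 - t) * θ) * !![E t, (1 - t) * s; 0, E' t]).det = 1
    rw [Matrix.det_mul, det_rotMat, Matrix.det_fin_two_of, one_mul]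
    simpa using hEE' t


lemma wnd_eq' (v : ℝ → ℂ) (hv : Continuous v) (h0 : ∀ x, v x ≠ 0)
    (u : ℝ → ℂ) (hu : Continuous u) (hl : ∀ x, Complex.exp (u x) = v (clamp x)) :
    wnd v = u 1 - u 0 := wnd_eq hv h0 hu hl

lemma wnd_hom {F : ℝ × ℝ → ℂ} (hF : Continuous F) (h0 : ∀ q, F q ≠ 0)
    (hloop : ∀ t, F (t, 1) = F (t, 0)) :
    wnd (fun x => F (0, x)) = wnd (fun x => F (1, x)) := by
  obtain ⟨u, huc, hu⟩ := lift2 F hF h0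
  set d : ℝ → ℂ := fun t => u (t, 1) - u (t, 0) with hd
  have hdc : Continuous d :=
    (huc.comp (continuous_id.prodMk continuous_const)).sub
      (huc.comp (continuous_id.prodMk continuous_const))
  have hd1 : ∀ t, Complex.exp (d t) = 1 := by
    intro t
    rw [hd]
    simp only
    rw [Complex.exp_sub, hu (t,1), hu (t,0)]
    simp only [clamp_one, clamp_zero]
    rw [hloop (clamp t), div_self (h0 _)]
  have hboth := exp_one_const hdc hd1 0 1
  have e0 : wnd (fun x => F (0, x)) = d 0 :=
    wnd_eq' (fun x => F (0, x)) (by exact hF.comp (Continuous.prodMk_right 0)) (fun x => h0 _)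
      (fun x => u (0, x)) (by exact huc.comp (continuous_const.prodMk continuous_id))
      (fun x => by show Complex.exp (u (0, x)) = F (0, clamp x); rw [hu (0,x)]; simp [clamp_zero])
  have e1 : wnd (fun x => F (1, x)) = d 1 :=
    wnd_eq' (fun x => F (1, x)) (by exact hF.comp (Continuous.prodMk_right 1)) (fun x => h0 _)
      (fun x => u (1, x)) (by exact huc.comp (continuous_const.prodMk continuous_id))
      (fun x => by show Complex.exp (u (1, x)) = F (1, clamp x); rw [hu (1,x)]; simp [clamp_one])
  rw [e0, e1, hboth]

lemma wnd_diag {F : ℝ × ℝ → ℂ} (hF : Continuous F) (h0 : ∀ q, F q ≠ 0) :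
    wnd (fun x => F (x, x)) = wnd (fun x => F (x, 0)) + wnd (fun s => F (1, s)) := by
  obtain ⟨u, huc, hu⟩ := lift2 F hF h0
  have ediag : wnd (fun x => F (x, x)) = u (1,1) - u (0,0) :=
    wnd_eq' (fun x => F (x, x)) (by exact hF.comp (continuous_id.prodMk continuous_id))
      (fun x => h0 _)
      (fun x => u (x, x)) (by exact huc.comp (continuous_id.prodMk continuous_id))
      (fun x => by show Complex.exp (u (x, x)) = F (clamp x, clamp x); rw [hu (x,x)])
  have ebot : wnd (fun x => F (x, 0)) = u (1,0) - u (0,0) :=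
    wnd_eq' (fun x => F (x, 0)) (by exact hF.comp (continuous_id.prodMk continuous_const))
      (fun x => h0 _)
      (fun x => u (x, 0)) (by exact huc.comp (continuous_id.prodMk continuous_const))
      (fun x => by show Complex.exp (u (x, 0)) = F (clamp x, 0); rw [hu (x,0)]; simp [clamp_zero])
  have eright : wnd (fun s => F (1, s)) = u (1,1) - u (1,0) :=
    wnd_eq' (fun s => F (1, s)) (by exact hF.comp (Continuous.prodMk_right 1)) (fun x => h0 _)
      (fun s => u (1, s)) (by exact huc.comp (continuous_const.prodMk continuous_id))
      (fun s => by show Complex.exp (u (1, s)) = F (1, clamp s); rw [hu (1,s)]; simp [clamp_one])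
  rw [ediag, ebot, eright]
  ring

lemma wnd_const (c : ℂ) (hc : c ≠ 0) : wnd (fun _ => c) = 0 := by
  have : c ∈ Set.range Complex.exp := by rw [Complex.range_exp]; exact hc
  obtain ⟨w, hw⟩ := this
  rw [wnd_eq continuous_const (fun _ => hc) (u := fun _ => w) continuous_const
    (fun _ => hw)]
  ring

lemma wnd_exp_loop (q₀ : ℂ) (hq : q₀ ≠ 0) :
    wnd (fun x => Complex.exp ((2 * Real.pi * x : ℝ) * Complex.I) * q₀) =
      2 * Real.pi * Complex.I := by
  have : q₀ ∈ Set.range Complex.exp := by rw [Complex.range_exp]; exact hq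
  obtain ⟨w, hw⟩ := this
  have hcont : Continuous fun x : ℝ => Complex.exp ((2 * Real.pi * x : ℝ) * Complex.I) * q₀ := by
    apply Continuous.mul _ continuous_const
    apply Complex.continuous_exp.comp
    exact (Complex.continuous_ofReal.comp (by fun_prop)).mul continuous_const
  have h0 : ∀ x : ℝ, Complex.exp ((2 * Real.pi * x : ℝ) * Complex.I) * q₀ ≠ 0 :=
    fun x => mul_ne_zero (Complex.exp_ne_zero _) hq
  rw [wnd_eq hcont h0
    (u := fun x => w + ((2 * Real.pi * clamp x : ℝ) : ℂ) * Complex.I)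
    (continuous_const.add ((Complex.continuous_ofReal.comp
      (continuous_const.mul continuous_clamp : Continuous fun x : ℝ => 2 * Real.pi * clamp x)).mul continuous_const))
    (fun x => by rw [Complex.exp_add, hw, mul_comm])]
  rw [clamp_one, clamp_zero]
  push_cast
  ring

lemma wnd_fixed_vec {P : ℝ → Mat2} (hP : Continuous P) (hdet : ∀ x, (P x).det = 1)
    (hPloop : P 1 = P 0) {q₀ : ℂ} (hq : q₀ ≠ 0) :
    wnd (fun x => actC (P x) q₀) = wnd (fun x => zC (P x)) := by
  have : q₀ ∈ Set.range Complex.exp := by rw [Complex.range_exp]; exact hq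
  obtain ⟨w, hw⟩ := this
  set F : ℝ × ℝ → ℂ := fun q => actC (P q.2) (Complex.exp ((1 - q.1) * w)) with hF
  have hFc : Continuous F := by
    apply continuous_actC (hP.comp continuous_snd)
    exact Complex.continuous_exp.comp ((continuous_const.sub
      (Complex.continuous_ofReal.comp continuous_fst)).mul continuous_const)
  have hF0 : ∀ q, F q ≠ 0 := fun q => actC_ne_zero (hdet _) (Complex.exp_ne_zero _)
  have hFloop : ∀ t, F (t, 1) = F (t, 0) := by
    intro t
    simp only [hF, hPloop]
  have := wnd_hom hFc hF0 hFloop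
  have el : (fun x => F (0, x)) = fun x => actC (P x) q₀ := by
    funext x
    simp only [hF]
    norm_num
    rw [hw]
  have er : (fun x => F (1, x)) = fun x => zC (P x) := by
    funext x
    simp only [hF]
    norm_num
    rw [actC_one_right]
  rwa [el, er] at this

lemma wnd_fixed_mat {M : Mat2} (hM : M.det = 1) {v : ℝ → ℂ} (hv : Continuous v)
    (h0 : ∀ x, v x ≠ 0) (hloop : v 1 = v 0) :
    wnd (fun x => actC M (v x)) = wnd v := by
  obtain ⟨p, hpc, hp0, hp1, hpdet⟩ := exists_sl2_path M hM
  set F : ℝ × ℝ → ℂ := fun q => actC (p q.1) (v q.2) with hF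
  have hFc : Continuous F := continuous_actC (hpc.comp continuous_fst) (hv.comp continuous_snd)
  have hF0 : ∀ q, F q ≠ 0 := fun q => actC_ne_zero (hpdet _) (h0 _)
  have hFloop : ∀ t, F (t, 1) = F (t, 0) := by
    intro t
    simp only [hF, hloop]
  have := wnd_hom hFc hF0 hFloop
  have el : (fun x => F (0, x)) = fun x => actC M (v x) := by
    funext x; simp only [hF, hp0]
  have er : (fun x => F (1, x)) = v := by
    funext x; simp only [hF, hp1, actC_id]
  rwa [el, er] at this

lemma wnd_double {w : ℝ → ℂ} (hw : Continuous w) (h0 : ∀ y, w y ≠ 0)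
    (hper : ∀ y, w (y + 1) = w y) :
    wnd (fun y => w (2 * y)) = 2 * wnd w := by
  obtain ⟨u₁, hu₁c, hu₁⟩ := lift1 w hw h0
  have hw10 : w 1 = w 0 := by
    have := hper 0
    rw [zero_add] at this
    exact this
  set ut : ℝ → ℂ := fun y => if y ≤ 1/2 then u₁ (2*y) else u₁ (2*y - 1) + (u₁ 1 - u₁ 0)
    with hut
  have hutc : Continuous ut := by
    apply Continuous.if_le
    · exact hu₁c.comp (by fun_prop)
    · exact (hu₁c.comp (by fun_prop)).add continuous_const
    · exact continuous_id
    · exact continuous_const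
    · intro y hy
      subst hy
      norm_num
  have hclA : ∀ y : ℝ, y ≤ 1/2 → clamp (2*y) = 2 * clamp y := by
    intro y hy
    rcases le_total y 0 with h | h
    · rw [clamp, clamp, min_eq_left (by linarith), min_eq_left (by linarith),
        max_eq_left (by linarith), max_eq_left (by linarith)]
      ring
    · rw [clamp, clamp, min_eq_left (by linarith), min_eq_left (by linarith),
        max_eq_right (by linarith), max_eq_right (by linarith)]
  have hlift : ∀ y, Complex.exp (ut y) = w (2 * clamp y) := by
    intro y
    rw [hut]
    simp only
    split_ifs with hy
    · rw [hu₁ (2*y), hclA y hy]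
    · push_neg at hy
      rw [Complex.exp_add, hu₁ (2*y - 1), Complex.exp_sub, hu₁ 1, hu₁ 0,
        clamp_one, clamp_zero, hw10, div_self (h0 0), mul_one]
      rcases le_total y 1 with h | h
      · have hc1 : clamp (2*y - 1) = 2*y - 1 := clamp_of_mem ⟨by linarith, by linarith⟩
        have hc2 : clamp y = y := clamp_of_mem ⟨by linarith, h⟩
        rw [hc1, hc2]
        have := hper (2*y - 1)
        rw [show 2*y - 1 + 1 = 2*y by ring] at this
        exact this.symm
      · have hc1 : clamp (2*y - 1) = 1 := by
          rw [clamp, min_eq_right (by linarith), max_eq_right (by norm_num)]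
        have hc2 : clamp y = 1 := by
          rw [clamp, min_eq_right (by linarith), max_eq_right (by norm_num)]
        rw [hc1, hc2]
        have := hper 1
        rw [show (1:ℝ) + 1 = 2*1 by ring] at this
        rw [this]
  have hvc : Continuous fun y : ℝ => w (2*y) := hw.comp (by fun_prop)
  rw [wnd_eq hvc (fun y => h0 _) hutc hlift]
  rw [wnd_eq hw h0 hu₁c hu₁]
  rw [hut]
  norm_num
  ring

/-- Let `f(x,y) = (x+α, y+2x)` on `𝕋²` (with `α` irrational) and
`A(x,y) = R_{2πx}`.  For any continuous `B : 𝕋² → SL(2,ℝ)`, the map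
`C(x,y) = B(f(x,y)) A(x,y) B(x,y)⁻¹` is not homotopic to a constant.
Maps on `𝕋² = ℝ²/ℤ²` are formalized as doubly `1`-periodic maps on `ℝ²`, with
values in `SL(2,ℝ)` realized as matrices of determinant one. -/
theorem conjugate_of_rotation_cocycle_not_nullhomotopic
    (α : ℝ) (hα : Irrational α)
    (B : ℝ × ℝ → Matrix (Fin 2) (Fin 2) ℝ) (hBcont : Continuous B)
    (hBdet : ∀ p, (B p).det = 1)
    (hBper₁ : ∀ x y : ℝ, B (x + 1, y) = B (x, y))
    (hBper₂ : ∀ x y : ℝ, B (x, y + 1) = B (x, y)) :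
    ¬ ∃ (H : ℝ → ℝ × ℝ → Matrix (Fin 2) (Fin 2) ℝ) (c : Matrix (Fin 2) (Fin 2) ℝ),
        Continuous (fun z : ℝ × (ℝ × ℝ) => H z.1 z.2) ∧
        (∀ t p, (H t p).det = 1) ∧
        (∀ t x y, H t (x + 1, y) = H t (x, y)) ∧
        (∀ t x y, H t (x, y + 1) = H t (x, y)) ∧
        (∀ x y : ℝ, H 0 (x, y) =
          B (x + α, y + 2 * x) * rotMat (2 * π * x) * (B (x, y))⁻¹) ∧
        (∀ p, H 1 p = c) := by
  rintro ⟨H, c, hHc, hHdet, hHp1, hHp2, hH0, hH1⟩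
  -- basic facts about B
  have hBinvdet : ∀ p : ℝ × ℝ, ((B p)⁻¹).det = 1 := fun p => det_inv_one (hBdet p)
  have hBinvC : Continuous fun p : ℝ × ℝ => (B p)⁻¹ := by
    have he : (fun p : ℝ × ℝ => (B p)⁻¹) = fun p => (B p).adjugate :=
      funext fun p => inv_eq_adj (hBdet p)
    rw [he]
    exact hBcont.matrix_adjugate
  have hB10 : B (1, 0) = B (0, 0) := by
    have := hBper₁ 0 0; rw [zero_add] at this; exact this
  have hB01 : B (0, 1) = B (0, 0) := by
    have := hBper₂ 0 0; rw [zero_add] at this; exact this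
  have hB12 : ∀ β : ℝ, B (1 + β, 2) = B (β, 0) := by
    intro β
    have h1 := hBper₁ β 2
    have e1 := hBper₂ β 1
    have e0 := hBper₂ β 0
    rw [add_comm 1 β, h1, show (2:ℝ) = 1 + 1 by norm_num, e1]
    conv_lhs => rw [show (1:ℝ) = 0 + 1 by norm_num]
    rw [e0]
  have hRot0 : rotMat (2 * π * 0) = 1 := by
    rw [show 2 * π * 0 = 0 by ring, rotMat_zero]
  have hRot1 : rotMat (2 * π * 1) = 1 := by
    rw [show 2 * π * 1 = 2 * π by ring, rotMat_two_pi]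
  set q₀ : ℂ := zC ((B (0, 0))⁻¹) with hq₀def
  have hq₀ : q₀ ≠ 0 := zC_ne_zero (hBinvdet (0, 0))
  set kk : ℂ := wnd (fun x => zC (B (x, 0))) with hkk
  set ll : ℂ := wnd (fun y => zC (B (0, y))) with hll
  set mm : ℂ := wnd (fun s => zC ((B (s, 0))⁻¹)) with hmm
  set γ : ℝ → ℂ := fun x => zC (H 0 (x, 0)) with hγ
  have hγeq : γ = fun x => zC (B (x + α, 2 * x) * (rotMat (2 * π * x) * (B (x, 0))⁻¹)) := by
    funext x
    rw [hγ]
    simp only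
    have := hH0 x 0
    rw [zero_add] at this
    rw [this, mul_assoc]
  have hγc : Continuous γ := by
    rw [hγ]
    exact continuous_zC (hHc.comp (by fun_prop : Continuous fun x : ℝ => ((0:ℝ), (x, (0:ℝ)))))
  have hγ0 : ∀ x, γ x ≠ 0 := fun x => zC_ne_zero (hHdet 0 (x, 0))
  ------------------------------------------------------------------
  -- Step A : the nullhomotopy forces wnd γ = 0
  ------------------------------------------------------------------
  have hstepA : wnd γ = 0 := by
    obtain ⟨u, huc, hu⟩ := lift3 (fun q => zC (H q.1 q.2)) (continuous_zC hHc)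
      (fun q => zC_ne_zero (hHdet q.1 q.2))
    have hu' : ∀ t x y : ℝ, Complex.exp (u (t, (x, y)))
        = zC (H (clamp t) (clamp x, clamp y)) := fun t x y => hu (t, (x, y))
    set d : ℝ → ℂ := fun t => u (t, (1, 0)) - u (t, (0, 0)) with hd
    have hdc : Continuous d := by
      apply Continuous.sub
      · exact huc.comp (by fun_prop : Continuous fun t : ℝ => (t, ((1:ℝ), (0:ℝ))))
      · exact huc.comp (by fun_prop : Continuous fun t : ℝ => (t, ((0:ℝ), (0:ℝ))))
    have hd1 : ∀ t, Complex.exp (d t) = 1 := by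
      intro t
      rw [hd]
      simp only
      rw [Complex.exp_sub, hu' t 1 0, hu' t 0 0, clamp_one, clamp_zero]
      have := hHp1 (clamp t) 0 0
      rw [zero_add] at this
      rw [this, div_self (zC_ne_zero (hHdet _ _))]
    have hdconst := exp_one_const hdc hd1 0 1
    have hd1zero : d 1 = 0 := by
      set e : ℝ → ℂ := fun s => u (1, (s, 0)) - u (1, (0, 0)) with he
      have hcdet : c.det = 1 := by rw [← hH1 (0, 0)]; exact hHdet 1 (0, 0)
      have hec : Continuous e := by
        apply Continuous.sub
        · exact huc.comp (by fun_prop : Continuous fun s : ℝ => ((1:ℝ), (s, (0:ℝ))))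
        · exact continuous_const
      have he1 : ∀ s, Complex.exp (e s) = 1 := by
        intro s
        rw [he]
        simp only
        rw [Complex.exp_sub, hu' 1 s 0, hu' 1 0 0, clamp_one, clamp_zero,
          hH1 (clamp s, 0), hH1 (0, 0), div_self (zC_ne_zero hcdet)]
      have he10 := exp_one_const hec he1 1 0
      have he0 : e 0 = 0 := by rw [he]; simp
      have : d 1 = e 1 := by rw [hd, he]
      rw [this, he10, he0]
    have hwγ : wnd γ = d 0 :=
      wnd_eq' γ hγc hγ0 (fun x => u (0, (x, 0)))
        (by exact huc.comp (by fun_prop : Continuous fun x : ℝ => ((0:ℝ), (x, (0:ℝ)))))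
        (fun x => by
          show Complex.exp (u (0, (x, 0))) = γ (clamp x)
          rw [hu' 0 x 0, clamp_zero, hγ])
    rw [hwγ, hdconst, hd1zero]
  ------------------------------------------------------------------
  -- Step B : computation of wnd γ
  ------------------------------------------------------------------
  -- split 1
  have hsplit1 :
      wnd γ = wnd (fun x => actC (B (x + α, 2 * x)) q₀)
        + wnd (fun s => actC (B (α, 0)) (zC (rotMat (2 * π * s) * (B (s, 0))⁻¹))) := by
    set F : ℝ × ℝ → ℂ :=
      fun q => zC (B (q.1 + α, 2 * q.1) * (rotMat (2 * π * q.2) * (B (q.2, 0))⁻¹)) with hF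
    have hdet3 : ∀ q : ℝ × ℝ,
        (B (q.1 + α, 2 * q.1) * (rotMat (2 * π * q.2) * (B (q.2, 0))⁻¹)).det = 1 := by
      intro q
      rw [Matrix.det_mul, Matrix.det_mul, hBdet, det_rotMat, hBinvdet]
      ring
    have hFc : Continuous F := by
      apply continuous_zC
      apply Continuous.matrix_mul
      · exact hBcont.comp (by fun_prop)
      · apply Continuous.matrix_mul
        · exact continuous_rotMat (by fun_prop)
        · exact hBinvC.comp (by fun_prop : Continuous fun q : ℝ × ℝ => (q.2, (0:ℝ)))
    have hF0 : ∀ q, F q ≠ 0 := fun q => zC_ne_zero (hdet3 q)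
    have hdg := wnd_diag hFc hF0
    have ed : (fun x => F (x, x)) = γ := by
      funext x
      rw [hγeq]
    have eb : (fun x => F (x, 0)) = fun x => actC (B (x + α, 2 * x)) q₀ := by
      funext x
      rw [hF]
      simp only
      rw [hRot0, one_mul, ← actC_zC, ← hq₀def]
    have er : (fun s => F (1, s))
        = fun s => actC (B (α, 0)) (zC (rotMat (2 * π * s) * (B (s, 0))⁻¹)) := by
      funext s
      rw [hF]
      simp only
      rw [show (1:ℝ) + α = 1 + α by ring, show 2 * (1:ℝ) = 2 by ring, hB12 α, ← actC_zC]
    rw [ed, eb, er] at hdg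
    exact hdg
  -- Term 1 : B along the diagonal loop
  have hcB1 : Continuous fun x : ℝ => B (x + α, 2 * x) := hBcont.comp (by fun_prop)
  have hPloop1 : (fun x : ℝ => B (x + α, 2 * x)) 1 = (fun x : ℝ => B (x + α, 2 * x)) 0 := by
    show B (1 + α, 2 * 1) = B (0 + α, 2 * 0)
    rw [show 2 * (1:ℝ) = 2 by norm_num, show 2 * (0:ℝ) = 0 by norm_num,
      show (0:ℝ) + α = α by ring]
    exact hB12 α
  have hT1a : wnd (fun x => actC (B (x + α, 2 * x)) q₀)
      = wnd (fun x => zC (B (x + α, 2 * x))) :=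
    wnd_fixed_vec hcB1 (fun x => hBdet _) hPloop1 hq₀
  have hT1b : wnd (fun x => zC (B (x + α, 2 * x))) = wnd (fun x => zC (B (x, 2 * x))) := by
    set F : ℝ × ℝ → ℂ := fun q => zC (B (q.2 + (1 - q.1) * α, 2 * q.2)) with hF
    have hFc : Continuous F := by
      apply continuous_zC
      exact hBcont.comp (by fun_prop)
    have hF0 : ∀ q, F q ≠ 0 := fun q => zC_ne_zero (hBdet _)
    have hloop : ∀ t, F (t, 1) = F (t, 0) := by
      intro t
      rw [hF]
      show zC (B (1 + (1 - t) * α, 2 * 1)) = zC (B (0 + (1 - t) * α, 2 * 0))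
      rw [show 2 * (1:ℝ) = 2 by norm_num, show 2 * (0:ℝ) = 0 by norm_num,
        show (0:ℝ) + (1 - t) * α = (1 - t) * α by ring]
      exact congrArg zC (hB12 ((1 - t) * α))
    have hh := wnd_hom hFc hF0 hloop
    have e0 : (fun x => F (0, x)) = fun x => zC (B (x + α, 2 * x)) := by
      funext x
      rw [hF]
      show zC (B (x + (1 - 0) * α, 2 * x)) = zC (B (x + α, 2 * x))
      rw [show x + (1 - (0:ℝ)) * α = x + α by ring]
    have e1 : (fun x => F (1, x)) = fun x => zC (B (x, 2 * x)) := by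
      funext x
      rw [hF]
      show zC (B (x + (1 - 1) * α, 2 * x)) = zC (B (x, 2 * x))
      rw [show x + (1 - (1:ℝ)) * α = x by ring]
    rwa [e0, e1] at hh
  have hT1c : wnd (fun x => zC (B (x, 2 * x))) = kk + 2 * ll := by
    set F : ℝ × ℝ → ℂ := fun q => zC (B (q.1, 2 * q.2)) with hF
    have hFc : Continuous F := continuous_zC (hBcont.comp (by fun_prop))
    have hF0 : ∀ q, F q ≠ 0 := fun q => zC_ne_zero (hBdet _)
    have hdg := wnd_diag hFc hF0
    have ed : (fun x => F (x, x)) = fun x => zC (B (x, 2 * x)) := rfl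
    have eb : (fun x => F (x, 0)) = fun x => zC (B (x, 0)) := by
      funext x
      rw [hF]
      show zC (B (x, 2 * 0)) = zC (B (x, 0))
      rw [show 2 * (0:ℝ) = 0 by norm_num]
    have er : (fun s => F (1, s)) = fun s => zC (B (0, 2 * s)) := by
      funext s
      rw [hF]
      show zC (B (1, 2 * s)) = zC (B (0, 2 * s))
      have := hBper₁ 0 (2 * s)
      rw [zero_add] at this
      rw [this]
    rw [ed, eb, er] at hdg
    have hdbl : wnd (fun s => zC (B (0, 2 * s))) = 2 * ll := by
      apply wnd_double (w := fun y => zC (B (0, y)))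
      · exact continuous_zC (hBcont.comp (by fun_prop))
      · exact fun y => zC_ne_zero (hBdet _)
      · exact fun y => congrArg zC (hBper₂ 0 y)
    rw [hdbl] at hdg
    exact hdg
  -- Term 2
  have hvT2c : Continuous fun s : ℝ => zC (rotMat (2 * π * s) * (B (s, 0))⁻¹) := by
    apply continuous_zC
    apply Continuous.matrix_mul (continuous_rotMat (by fun_prop))
    exact hBinvC.comp (by fun_prop : Continuous fun s : ℝ => (s, (0:ℝ)))
  have hvT2det : ∀ s : ℝ, (rotMat (2 * π * s) * (B (s, 0))⁻¹).det = 1 := by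
    intro s
    rw [Matrix.det_mul, det_rotMat, hBinvdet]
    ring
  have hvT2loop : (fun s : ℝ => zC (rotMat (2 * π * s) * (B (s, 0))⁻¹)) 1
      = (fun s : ℝ => zC (rotMat (2 * π * s) * (B (s, 0))⁻¹)) 0 := by
    simp only
    rw [hRot0, hRot1, hB10]
  have hT2a : wnd (fun s => actC (B (α, 0)) (zC (rotMat (2 * π * s) * (B (s, 0))⁻¹)))
      = wnd (fun s => zC (rotMat (2 * π * s) * (B (s, 0))⁻¹)) :=
    wnd_fixed_mat (hBdet (α, 0)) hvT2c (fun s => zC_ne_zero (hvT2det s)) hvT2loop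
  have hT2b : wnd (fun s => zC (rotMat (2 * π * s) * (B (s, 0))⁻¹))
      = 2 * π * Complex.I + mm := by
    set F : ℝ × ℝ → ℂ := fun q => zC (rotMat (2 * π * q.1) * (B (q.2, 0))⁻¹) with hF
    have hFc : Continuous F := by
      apply continuous_zC
      apply Continuous.matrix_mul (continuous_rotMat (by fun_prop))
      exact hBinvC.comp (by fun_prop : Continuous fun q : ℝ × ℝ => (q.2, (0:ℝ)))
    have hF0 : ∀ q : ℝ × ℝ, F q ≠ 0 := by
      intro q
      apply zC_ne_zero
      rw [Matrix.det_mul, det_rotMat, hBinvdet]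
      ring
    have hdg := wnd_diag hFc hF0
    have ed : (fun x => F (x, x)) = fun s => zC (rotMat (2 * π * s) * (B (s, 0))⁻¹) := rfl
    have eb : (fun x => F (x, 0))
        = fun x => Complex.exp ((2 * π * x : ℝ) * Complex.I) * q₀ := by
      funext x
      rw [hF]
      simp only
      rw [← actC_zC, ← hq₀def, actC_rot]
    have er : (fun s => F (1, s)) = fun s => zC ((B (s, 0))⁻¹) := by
      funext s
      rw [hF]
      simp only
      rw [hRot1, one_mul]
    rw [ed, eb, er] at hdg
    rw [hdg, wnd_exp_loop q₀ hq₀]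
  -- mm = - kk
  have hmk : kk + mm = 0 := by
    set F : ℝ × ℝ → ℂ := fun q => zC (B (q.1, 0) * (B (q.2, 0))⁻¹) with hF
    have hFc : Continuous F := by
      apply continuous_zC
      apply Continuous.matrix_mul
      · exact hBcont.comp (by fun_prop : Continuous fun q : ℝ × ℝ => (q.1, (0:ℝ)))
      · exact hBinvC.comp (by fun_prop : Continuous fun q : ℝ × ℝ => (q.2, (0:ℝ)))
    have hF0 : ∀ q : ℝ × ℝ, F q ≠ 0 := by
      intro q
      apply zC_ne_zero
      rw [Matrix.det_mul, hBdet, hBinvdet]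
      ring
    have hdg := wnd_diag hFc hF0
    have hz1 : zC 1 = 1 := by
      rw [zC]
      norm_num [Matrix.one_apply]
    have ed : (fun x => F (x, x)) = fun _ => (1 : ℂ) := by
      funext x
      rw [hF]
      simp only
      rw [mul_inv_one (hBdet (x, 0)), hz1]
    have eb : (fun x => F (x, 0)) = fun x => actC (B (x, 0)) q₀ := by
      funext x
      rw [hF]
      simp only
      rw [← actC_zC, ← hq₀def]
    have er : (fun s => F (1, s)) = fun s => actC (B (0, 0)) (zC ((B (s, 0))⁻¹)) := by
      funext s
      rw [hF]
      simp only
      rw [hB10, ← actC_zC]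
    rw [ed, eb, er] at hdg
    have h1 : wnd (fun _ : ℝ => (1:ℂ)) = 0 := wnd_const 1 one_ne_zero
    have h2 : wnd (fun x => actC (B (x, 0)) q₀) = kk := by
      exact wnd_fixed_vec (hBcont.comp (by fun_prop : Continuous fun x : ℝ => (x, (0:ℝ))))
        (fun x => hBdet _) hB10 hq₀
    have h3 : wnd (fun s => actC (B (0, 0)) (zC ((B (s, 0))⁻¹))) = mm := by
      apply wnd_fixed_mat (hBdet (0, 0))
        (continuous_zC (hBinvC.comp (by fun_prop : Continuous fun s : ℝ => (s, (0:ℝ)))))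
        (fun s => zC_ne_zero (hBinvdet _))
      show zC ((B (1, 0))⁻¹) = zC ((B (0, 0))⁻¹)
      rw [hB10]
    rw [h1, h2, h3] at hdg
    exact hdg.symm
  -- integrality of ll
  have hllint : ∃ n : ℤ, ll = n * (2 * π * Complex.I) := by
    apply wnd_loop_int (continuous_zC (hBcont.comp (by fun_prop)))
      (fun y => zC_ne_zero (hBdet _))
    exact congrArg zC hB01
  obtain ⟨n, hn⟩ := hllint
  ------------------------------------------------------------------
  -- conclusion
  ------------------------------------------------------------------
  have htotal : wnd γ = 2 * ll + 2 * π * Complex.I := by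
    rw [hsplit1, hT1a, hT1b, hT1c, hT2a, hT2b]
    have : mm = - kk := by linear_combination hmk
    rw [this]
    ring
  rw [hstepA, hn] at htotal
  have hπI : (2 * (π:ℂ) * Complex.I) ≠ 0 := by
    simp [Real.pi_ne_zero, Complex.I_ne_zero]
  have hcoef : (2 * (n:ℂ) + 1) = 0 := by
    have h2 : (2 * (n:ℂ) + 1) * (2 * π * Complex.I) = 0 := by
      linear_combination -htotal
    rcases mul_eq_zero.mp h2 with h | h
    · exact h
    · exact absurd h hπI
  have : (2 * n + 1 : ℤ) = 0 := by exact_mod_cast hcoef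
  omega
end
end
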